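/- arXiv:1810.07627 — 6 statements merged into one kernel-verified Lean document; each statement's English description precedes it below -/
import Mathlib

section
/- In the enhanced power graph of a group G (vertices are elements of G, two distinct elements adjacent iff they lie in a common cyclic subgroup), any maximal clique is either a cyclic subgroup or a locally cyclic subgroup of G. -/
open SimpleGraph

/-- The enhanced power graph of a group. -/
def enhancedPowerGraph (G : Type*) [Group G] : SimpleGraph G where
  Adj x y := x ≠ y ∧ ∃ z : G, x ∈ Subgroup.zpowers z ∧ y ∈ Subgroup.zpowers z
  symm := ⟨by rintro x y ⟨h, z, hx, hy⟩; exact ⟨h.symm, z, hy, hx⟩⟩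
  loopless := ⟨by rintro x ⟨h, -⟩; exact h rfl⟩

/-- The (undirected) power graph of a group. -/
def powerGraph (G : Type*) [Group G] : SimpleGraph G where
  Adj x y := x ≠ y ∧ (x ∈ Subgroup.zpowers y ∨ y ∈ Subgroup.zpowers x)
  symm := ⟨by rintro x y ⟨h, hz⟩; exact ⟨h.symm, hz.symm⟩⟩
  loopless := ⟨by rintro x ⟨h, -⟩; exact h rfl⟩

/-- The strong product of two simple graphs. -/
def strongProd {α β : Type*} (Γ : SimpleGraph α) (Δ : SimpleGraph β) :
    SimpleGraph (α × β) where
  Adj p q := (p.1 = q.1 ∧ Δ.Adj p.2 q.2) ∨ (Γ.Adj p.1 q.1 ∧ p.2 = q.2) ∨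
    (Γ.Adj p.1 q.1 ∧ Δ.Adj p.2 q.2)
  symm := ⟨by
    rintro ⟨a, b⟩ ⟨c, d⟩ (⟨h1, h2⟩ | ⟨h1, h2⟩ | ⟨h1, h2⟩)
    · exact Or.inl ⟨h1.symm, h2.symm⟩
    · exact Or.inr (Or.inl ⟨h1.symm, h2.symm⟩)
    · exact Or.inr (Or.inr ⟨h1.symm, h2.symm⟩)⟩
  loopless := ⟨by
    rintro ⟨a, b⟩ (⟨-, h⟩ | ⟨h, -⟩ | ⟨h, -⟩) <;> exact h.ne rfl⟩

/-- The automorphism group of a simple graph, as a subgroup of permutations. -/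
def graphAut {V : Type*} (Γ : SimpleGraph V) : Subgroup (Equiv.Perm V) where
  carrier := {σ | ∀ x y, Γ.Adj (σ x) (σ y) ↔ Γ.Adj x y}
  one_mem' := fun _ _ => Iff.rfl
  mul_mem' := by
    intro σ τ hσ hτ x y
    simpa [Equiv.Perm.mul_apply] using (hσ (τ x) (τ y)).trans (hτ x y)
  inv_mem' := by
    intro σ hσ x y
    simpa using (hσ (σ⁻¹ x) (σ⁻¹ y)).symm

/-- A subgroup is maximal cyclic if it is maximal among cyclic subgroups. -/
def IsMaxCyclic {G : Type*} [Group G] (C : Subgroup G) : Prop :=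
  Maximal (fun K : Subgroup G => ∃ g : G, K = Subgroup.zpowers g) C

/-- The closed neighborhood of a vertex. -/
def closedNbhd {V : Type*} (Γ : SimpleGraph V) (x : V) : Set V :=
  Γ.neighborSet x ∪ {x}

/-- A subgroup is locally cyclic if all its finitely generated subgroups are cyclic. -/
def IsLocallyCyclicSubgroup {G : Type*} [Group G] (H : Subgroup G) : Prop :=
  ∀ K : Subgroup G, K ≤ H → K.FG → IsCyclic K


section AuxLemmas
open Subgroup



lemma isCyclic_zpowers' {G : Type*} [Group G] (z : G) : IsCyclic ↥(zpowers z) := by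
  refine ⟨⟨⟨z, mem_zpowers z⟩, fun x => ?_⟩⟩
  obtain ⟨k, hk⟩ := x.2
  exact ⟨k, Subtype.ext (by simpa using hk)⟩

lemma exists_generator_of_le {G : Type*} [Group G] {H : Subgroup G} {z : G}
    (h : H ≤ zpowers z) : ∃ w, w ∈ H ∧ H = zpowers w := by
  haveI : IsCyclic ↥(zpowers z) := isCyclic_zpowers' z
  haveI : IsCyclic ↥H := Subgroup.isCyclic_of_le h
  obtain ⟨g, hg⟩ := IsCyclic.exists_generator (α := ↥H)
  refine ⟨(g : G), g.2, le_antisymm (fun x hx => ?_) (zpowers_le.mpr g.2)⟩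
  obtain ⟨k, hk⟩ := hg ⟨x, hx⟩
  exact ⟨k, by
    have := congrArg (Subtype.val) hk
    simpa using this⟩

lemma card_le_of_pairwise_cyclic {Q : Type*} [Group Q] {p : ℕ} (hp : p.Prime)
    (hexp : ∀ g : Q, g ^ p = 1) (x y t : Q)
    (hgen : Subgroup.closure {x, y, t} = ⊤)
    (hxy : ∃ w : Q, x ∈ zpowers w ∧ y ∈ zpowers w)
    (hxt : ∃ w : Q, x ∈ zpowers w ∧ t ∈ zpowers w)
    (hyt : ∃ w : Q, y ∈ zpowers w ∧ t ∈ zpowers w) :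
    Nat.card Q ≤ p := by
  have hord : ∀ g : Q, orderOf g ≤ p ∧ IsOfFinOrder g := by
    intro g
    have h1 : orderOf g ∣ p := orderOf_dvd_of_pow_eq_one (hexp g)
    have h2 : IsOfFinOrder g := isOfFinOrder_iff_pow_eq_one.mpr ⟨p, hp.pos, hexp g⟩
    exact ⟨Nat.le_of_dvd hp.pos h1, h2⟩
  have key : ∀ g : Q, (⊤ : Subgroup Q) ≤ zpowers g → Nat.card Q ≤ p := by
    intro g hle
    have : zpowers g = ⊤ := le_antisymm le_top hle
    calc Nat.card Q = Nat.card (⊤ : Subgroup Q) := (Subgroup.card_top).symm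
      _ = Nat.card (zpowers g) := by rw [this]
      _ = orderOf g := Nat.card_zpowers g
      _ ≤ p := (hord g).1
  by_cases hx1 : x = 1
  · obtain ⟨w, hy, ht⟩ := hyt
    refine key w ?_
    rw [← hgen]
    refine (closure_le _).mpr ?_
    intro a ha
    rcases ha with rfl | rfl | rfl
    · rw [hx1]; exact one_mem _
    · exact hy
    · exact ht
  · -- x ≠ 1 : everything is in zpowers x
    have hmem : ∀ w a : Q, x ∈ zpowers w → a ∈ zpowers w → a ∈ zpowers x := by
      intro w a hxw haw
      haveI : Finite ↥(zpowers w) := Set.Finite.to_subtype ((hord w).2.finite_zpowers)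
      have hw1 : w ≠ 1 := by
        rintro rfl
        rw [zpowers_one_eq_bot, Subgroup.mem_bot] at hxw
        exact hx1 hxw
      have hcards : Nat.card (zpowers w) ≤ Nat.card (zpowers x) := by
        rw [Nat.card_zpowers, Nat.card_zpowers]
        have h1 : orderOf x = p :=
          ((Nat.Prime.eq_one_or_self_of_dvd hp _ (orderOf_dvd_of_pow_eq_one (hexp x))).resolve_left
            (by simpa [orderOf_eq_one_iff] using hx1))
        have h2 : orderOf w ≤ p := (hord w).1
        omega
      have : zpowers x = zpowers w :=
        Subgroup.eq_of_le_of_card_ge (zpowers_le.mpr hxw) hcards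
      rw [this]; exact haw
    refine key x ?_
    rw [← hgen]
    refine (closure_le _).mpr ?_
    intro a ha
    rcases ha with rfl | rfl | rfl
    · exact mem_zpowers _
    · obtain ⟨w, hxw, hyw⟩ := hxy
      exact hmem w a hxw hyw
    · obtain ⟨w, hxw, htw⟩ := hxt
      exact hmem w a hxw htw


open Subgroup

lemma card_ker_le_of_quot {B : Type*} [CommGroup B] [Finite B] (f : B →* B)
    {p : ℕ} (h : Nat.card (B ⧸ f.range) ≤ p) : Nat.card f.ker ≤ p := by
  have h1 : Nat.card B = Nat.card (B ⧸ f.range) * Nat.card f.range :=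
    Subgroup.card_eq_card_quotient_mul_card_subgroup f.range
  have h2 : Nat.card B = Nat.card (B ⧸ f.ker) * Nat.card f.ker :=
    Subgroup.card_eq_card_quotient_mul_card_subgroup f.ker
  have h3 : Nat.card (B ⧸ f.ker) = Nat.card f.range :=
    Nat.card_congr (QuotientGroup.quotientKerEquivRange f).toEquiv
  have hpos : 0 < Nat.card f.range := Nat.card_pos
  have heq : Nat.card (B ⧸ f.range) * Nat.card ↥f.range = Nat.card ↥f.range * Nat.card ↥f.ker := by
    rw [← h1, h2, h3]
  rw [mul_comm] at heq
  have := Nat.eq_of_mul_eq_mul_left hpos heq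
  omega

lemma card_pow_ker_le {B : Type*} [CommGroup B] [Finite B]
    (h : ∀ p : ℕ, p.Prime → Nat.card (B ⧸ (powMonoidHom p : B →* B).range) ≤ p) :
    ∀ n : ℕ, 0 < n → Nat.card ((powMonoidHom n : B →* B).ker) ≤ n := by
  intro n
  induction n using Nat.strong_induction_on with
  | _ n IH =>
    intro hn
    rcases eq_or_ne n 1 with rfl | hn1
    · have hbot : ((powMonoidHom 1 : B →* B).ker) = ⊥ := by
        ext b; simp [MonoidHom.mem_ker]
      rw [hbot]
      simp [Subgroup.card_bot]
    by_cases hnp : n.Prime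
    · exact card_ker_le_of_quot _ (h n hnp)
    · set p := n.minFac with hpdef
      have hp : p.Prime := Nat.minFac_prime hn1
      obtain ⟨m, hpm⟩ : p ∣ n := Nat.minFac_dvd n
      have hm0 : 0 < m := by
        rcases Nat.eq_zero_or_pos m with rfl | h'
        · omega
        · exact h'
      have hm1 : m ≠ 1 := by
        rintro rfl
        rw [mul_one] at hpm
        exact hnp (hpm ▸ hp)
      have hmn : m < n := by nlinarith [hp.two_le]
      set Kn := (powMonoidHom n : B →* B).ker with hKn
      set φ : ↥Kn →* B := (powMonoidHom m).comp Kn.subtype with hφ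
      have hkerφ : ∀ b : ↥Kn, b ∈ φ.ker ↔ ((b : B)) ^ m = 1 := by
        intro b; simp [hφ, MonoidHom.mem_ker]
      have hrange : φ.range ≤ (powMonoidHom p : B →* B).ker := by
        rintro c ⟨b, rfl⟩
        have hb : ((b : B)) ^ n = 1 := by
          have hb2 : (b : B) ∈ (powMonoidHom n : B →* B).ker := b.2
          rwa [MonoidHom.mem_ker, powMonoidHom_apply] at hb2
        simp only [hφ, MonoidHom.mem_ker, MonoidHom.comp_apply, powMonoidHom_apply,
          Subgroup.coe_subtype, ← pow_mul]
        rw [show m * p = n by rw [hpm]; ring]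
        exact hb
      have e1 : Nat.card ↥Kn = Nat.card (↥Kn ⧸ φ.ker) * Nat.card φ.ker :=
        Subgroup.card_eq_card_quotient_mul_card_subgroup φ.ker
      have e2 : Nat.card (↥Kn ⧸ φ.ker) = Nat.card φ.range :=
        Nat.card_congr (QuotientGroup.quotientKerEquivRange φ).toEquiv
      have e3 : Nat.card φ.range ≤ p :=
        le_trans (Subgroup.card_le_of_le hrange) (card_ker_le_of_quot _ (h p hp))
      have e4 : Nat.card φ.ker ≤ m := by
        have hKm := IH m hmn hm0
        have hinj : Function.Injective
            (fun b : φ.ker => (⟨(b : B), by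
              simp only [MonoidHom.mem_ker, powMonoidHom_apply]
              exact (hkerφ b.1).mp b.2⟩ : ↥((powMonoidHom m : B →* B).ker))) := by
          intro a b hab
          apply Subtype.ext
          apply Subtype.ext
          exact congrArg (fun c : ↥((powMonoidHom m : B →* B).ker) => (c : B)) hab
        exact le_trans (Nat.card_le_card_of_injective _ hinj) hKm
      calc Nat.card ↥Kn = Nat.card (↥Kn ⧸ φ.ker) * Nat.card φ.ker := e1
        _ = Nat.card φ.range * Nat.card φ.ker := by rw [e2]
        _ ≤ p * m := Nat.mul_le_mul e3 e4
        _ = n := hpm.symm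

lemma isCyclic_of_prime_quot_le {B : Type*} [CommGroup B] [Finite B]
    (h : ∀ p : ℕ, p.Prime → Nat.card (B ⧸ (powMonoidHom p : B →* B).range) ≤ p) :
    IsCyclic B := by
  classical
  cases nonempty_fintype B
  refine isCyclic_of_card_pow_eq_one_le ?_
  intro n hn
  have := card_pow_ker_le h n hn
  have hcard : Nat.card ((powMonoidHom n : B →* B).ker)
      = Fintype.card {a : B // a ^ n = 1} := by
    rw [Nat.card_eq_fintype_card]
    exact Fintype.card_congr (Equiv.subtypeEquivRight (by
      intro x; simp [MonoidHom.mem_ker]))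
  rw [Fintype.card_subtype] at hcard
  omega


open Subgroup

lemma push_pair {B Q : Type*} [Group B] [Group Q] (f : B →* Q) {a b : B}
    (h : ∃ w, a ∈ zpowers w ∧ b ∈ zpowers w) :
    ∃ w, f a ∈ zpowers w ∧ f b ∈ zpowers w := by
  obtain ⟨w, ha, hb⟩ := h
  obtain ⟨i, hi⟩ := Subgroup.mem_zpowers_iff.mp ha
  obtain ⟨j, hj⟩ := Subgroup.mem_zpowers_iff.mp hb
  exact ⟨f w, Subgroup.mem_zpowers_iff.mpr ⟨i, by rw [← map_zpow, hi]⟩,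
    Subgroup.mem_zpowers_iff.mpr ⟨j, by rw [← map_zpow, hj]⟩⟩


lemma card_le_via_hom {B Q : Type*} [Group B] [Group Q] {p : ℕ} (hp : p.Prime)
    {x y t : B} (hgen : Subgroup.closure {x, y, t} = ⊤)
    (hxy : ∃ w : B, x ∈ zpowers w ∧ y ∈ zpowers w)
    (hxt : ∃ w : B, x ∈ zpowers w ∧ t ∈ zpowers w)
    (hyt : ∃ w : B, y ∈ zpowers w ∧ t ∈ zpowers w)
    (f : B →* Q) (hsurj : Function.Surjective f)
    (hexp : ∀ g : Q, g ^ p = 1) : Nat.card Q ≤ p := by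
  refine card_le_of_pairwise_cyclic hp hexp (f x) (f y) (f t) ?_
    (push_pair f hxy) (push_pair f hxt) (push_pair f hyt)
  have h1 : Subgroup.closure ({f x, f y, f t} : Set Q)
      = Subgroup.map f (Subgroup.closure {x, y, t}) := by
    rw [MonoidHom.map_closure]
    congr 1
    simp [Set.image_insert_eq]
  rw [h1, hgen, ← MonoidHom.range_eq_map]
  exact MonoidHom.range_eq_top_of_surjective f hsurj

open scoped DirectSum in
lemma isCyclic_of_pairwise_cyclic {B : Type*} [CommGroup B] [fgB : Group.FG B] {x y t : B}
    (hgen : Subgroup.closure {x, y, t} = ⊤)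
    (hxy : ∃ w : B, x ∈ zpowers w ∧ y ∈ zpowers w)
    (hxt : ∃ w : B, x ∈ zpowers w ∧ t ∈ zpowers w)
    (hyt : ∃ w : B, y ∈ zpowers w ∧ t ∈ zpowers w) : IsCyclic B := by
  classical
  have hquot : ∀ p : ℕ, p.Prime → Nat.card (B ⧸ (powMonoidHom p : B →* B).range) ≤ p := by
    intro p hp
    refine card_le_via_hom hp hgen hxy hxt hyt (QuotientGroup.mk' _)
      (QuotientGroup.mk'_surjective _) ?_
    intro g
    induction g using QuotientGroup.induction_on with
    | _ b =>
      have h1 : ((b : B ⧸ (powMonoidHom p : B →* B).range)) ^ p = ((b ^ p : B) : _) := by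
        rw [QuotientGroup.mk_pow]
      rw [h1, QuotientGroup.eq_one_iff]
      exact ⟨b, rfl⟩
  have hbad : ∀ p : ℕ, p.Prime →
      ∀ ψ : Additive B →+ (ZMod p × ZMod p), ¬ Function.Surjective ψ := by
    intro p hp ψ hsurj
    set f : B →* Multiplicative (ZMod p × ZMod p) :=
      MonoidHom.mk' (fun b => Multiplicative.ofAdd (ψ (Additive.ofMul b)))
        (by intro a b; simp [map_add]) with hf
    have hsurj' : Function.Surjective f := by
      intro q
      obtain ⟨a, ha⟩ := hsurj (Multiplicative.toAdd q)
      exact ⟨Additive.toMul a, by simp [hf, ha]⟩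
    have hexp : ∀ g : Multiplicative (ZMod p × ZMod p), g ^ p = 1 := by
      intro g
      have h0 : p • (Multiplicative.toAdd g) = 0 := by
        ext <;> simp [nsmul_eq_mul, ZMod.natCast_self]
      rw [← ofAdd_toAdd (g ^ p), toAdd_pow, h0]
      rfl
    have hcard := card_le_via_hom hp hgen hxy hxt hyt f hsurj' hexp
    have hc2 : Nat.card (Multiplicative (ZMod p × ZMod p)) = p * p := by
      rw [Nat.card_congr Multiplicative.toAdd, Nat.card_prod, Nat.card_zmod]
    rw [hc2] at hcard
    nlinarith [hp.two_le]
  haveI : AddGroup.FG (Additive B) := GroupFG.iff_add_fg.mp fgB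
  obtain ⟨n, ι, fι, p, hp, e, ⟨F⟩⟩ :=
    AddCommGroup.equiv_free_prod_directSum_zmod (Additive B)
  rcases Nat.lt_or_ge n 2 with hn2 | hn2
  · interval_cases n
    · -- n = 0 : B is finite
      haveI : ∀ i, NeZero (p i ^ e i) := fun i => ⟨pow_ne_zero _ (hp i).pos.ne'⟩
      haveI hsub : Subsingleton (Fin 0 →₀ ℤ) := by
        constructor
        intro a b
        ext i
        exact i.elim0
      haveI : Finite (⨁ i : ι, ZMod (p i ^ e i)) :=
        Finite.of_equiv _ (DFinsupp.equivFunOnFintype (ι := ι)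
          (β := fun i => ZMod (p i ^ e i))).symm
      haveI : Finite ((Fin 0 →₀ ℤ) × ⨁ i : ι, ZMod (p i ^ e i)) := by
        infer_instance
      haveI : Finite B := Finite.of_equiv _ (F.toEquiv.symm.trans Additive.toMul)
      exact isCyclic_of_prime_quot_le hquot
    · -- n = 1
      by_cases hE : ∀ i, e i = 0
      · -- P ≅ ℤ : cyclic
        haveI hsub : Subsingleton (⨁ i : ι, ZMod (p i ^ e i)) := by
          constructor
          intro a b
          refine DFinsupp.ext fun i => ?_
          haveI : Subsingleton (ZMod (p i ^ e i)) := by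
            rw [hE i, pow_zero]
            infer_instance
          exact Subsingleton.elim _ _
        have hcyc : IsAddCyclic ((Fin 1 →₀ ℤ) × ⨁ i : ι, ZMod (p i ^ e i)) := by
          refine ⟨⟨(Finsupp.single 0 1, 0), fun z => ?_⟩⟩
          refine ⟨z.1 0, ?_⟩
          show (z.1 0) • ((Finsupp.single 0 1 : Fin 1 →₀ ℤ), (0 : ⨁ i : ι, ZMod (p i ^ e i))) = z
          have h2 : (z.1 0) • ((Finsupp.single 0 1 : Fin 1 →₀ ℤ), (0 : ⨁ i : ι, ZMod (p i ^ e i)))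
              = ((z.1 0) • (Finsupp.single 0 1 : Fin 1 →₀ ℤ), (z.1 0) • (0 : ⨁ i : ι, ZMod (p i ^ e i))) := rfl
          rw [h2]
          refine Prod.ext ?_ (Subsingleton.elim _ _)
          show (z.1 0) • (Finsupp.single 0 1 : Fin 1 →₀ ℤ) = z.1
          refine Finsupp.ext fun j => ?_
          have hj : j = 0 := Subsingleton.elim _ _
          subst hj
          simp
        have : IsAddCyclic (Additive B) :=
          isAddCyclic_of_surjective F.symm.toAddMonoidHom F.symm.surjective
        exact isAddCyclic_additive_iff.mp this
      · -- n = 1 with nontrivial torsion : contradiction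
        push_neg at hE
        obtain ⟨i0, hi0⟩ := hE
        exfalso
        have hdvd : p i0 ∣ p i0 ^ e i0 := dvd_pow_self (p i0) hi0
        set g1 : ((Fin 1 →₀ ℤ) × ⨁ i : ι, ZMod (p i ^ e i)) →+ ZMod (p i0) :=
          (Int.castAddHom (ZMod (p i0))).comp ((Finsupp.applyAddHom (0 : Fin 1)).comp
            (AddMonoidHom.fst _ _)) with hg1
        set g2 : ((Fin 1 →₀ ℤ) × ⨁ i : ι, ZMod (p i ^ e i)) →+ ZMod (p i0) :=
          ((ZMod.castHom hdvd (ZMod (p i0))).toAddMonoidHom).comp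
            ((DFinsupp.evalAddMonoidHom i0).comp (AddMonoidHom.snd _ _)) with hg2
        set ψ : Additive B →+ (ZMod (p i0) × ZMod (p i0)) := (g1.prod g2).comp F.toAddMonoidHom with hψ
        refine hbad (p i0) (hp i0) ψ ?_
        have hGsurj : Function.Surjective (g1.prod g2) := by
          rintro ⟨a, b⟩
          obtain ⟨a', ha'⟩ := ZMod.intCast_surjective a
          obtain ⟨b', hb'⟩ := ZMod.intCast_surjective b
          refine ⟨(Finsupp.single 0 a', DirectSum.of (fun i => ZMod (p i ^ e i)) i0 ((b' : ℤ) : ZMod (p i0 ^ e i0))), ?_⟩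
          have e1 : g1 (Finsupp.single 0 a', DirectSum.of (fun i => ZMod (p i ^ e i)) i0 ((b' : ℤ) : ZMod (p i0 ^ e i0))) = a := by
            simp [hg1, ha']
          have e2 : g2 (Finsupp.single 0 a', DirectSum.of (fun i => ZMod (p i ^ e i)) i0 ((b' : ℤ) : ZMod (p i0 ^ e i0))) = b := by
            have hof : (DFinsupp.evalAddMonoidHom i0) (DirectSum.of (fun i => ZMod (p i ^ e i)) i0 ((b' : ℤ) : ZMod (p i0 ^ e i0)))
                = ((b' : ℤ) : ZMod (p i0 ^ e i0)) := DirectSum.of_eq_same i0 _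
            show (ZMod.castHom hdvd (ZMod (p i0))) ((DFinsupp.evalAddMonoidHom i0)
              ((DirectSum.of (fun i => ZMod (p i ^ e i)) i0) ((b' : ℤ) : ZMod (p i0 ^ e i0)))) = b
            rw [hof, map_intCast]
            exact hb'
          rw [AddMonoidHom.prod_apply, e1, e2]
        exact hGsurj.comp F.surjective
  · -- n ≥ 2 : contradiction
    exfalso
    set i0 : Fin n := ⟨0, by omega⟩ with hi0
    set i1 : Fin n := ⟨1, by omega⟩ with hi1
    have hne : i0 ≠ i1 := by
      simp [hi0, hi1, Fin.ext_iff]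
    set g1 : ((Fin n →₀ ℤ) × ⨁ i : ι, ZMod (p i ^ e i)) →+ ZMod 2 :=
      (Int.castAddHom (ZMod 2)).comp ((Finsupp.applyAddHom i0).comp
        (AddMonoidHom.fst _ _)) with hg1
    set g2 : ((Fin n →₀ ℤ) × ⨁ i : ι, ZMod (p i ^ e i)) →+ ZMod 2 :=
      (Int.castAddHom (ZMod 2)).comp ((Finsupp.applyAddHom i1).comp
        (AddMonoidHom.fst _ _)) with hg2
    set ψ : Additive B →+ (ZMod 2 × ZMod 2) := (g1.prod g2).comp F.toAddMonoidHom with hψ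
    refine hbad 2 Nat.prime_two ψ ?_
    have hGsurj : Function.Surjective (g1.prod g2) := by
      rintro ⟨a, b⟩
      obtain ⟨a', ha'⟩ := ZMod.intCast_surjective a
      obtain ⟨b', hb'⟩ := ZMod.intCast_surjective b
      refine ⟨(Finsupp.single i0 a' + Finsupp.single i1 b', 0), ?_⟩
      have e1 : (Finsupp.single i0 a' + Finsupp.single i1 b') i0 = a' := by
        rw [Finsupp.add_apply, Finsupp.single_eq_same, Finsupp.single_eq_of_ne' hne.symm]
        exact add_zero a'
      have e2 : (Finsupp.single i0 a' + Finsupp.single i1 b') i1 = b' := by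
        rw [Finsupp.add_apply, Finsupp.single_eq_same, Finsupp.single_eq_of_ne' hne]
        exact zero_add b'
      show ((((Finsupp.single i0 a' + Finsupp.single i1 b') i0 : ℤ) : ZMod 2),
        (((Finsupp.single i0 a' + Finsupp.single i1 b') i1 : ℤ) : ZMod 2)) = (a, b)
      rw [e1, e2, ha', hb']
    exact hGsurj.comp F.surjective




lemma comm_of_pair {G : Type*} [Group G] {a b : G}
    (h : ∃ z : G, a ∈ zpowers z ∧ b ∈ zpowers z) : a * b = b * a := by
  obtain ⟨z, ha, hb⟩ := h
  obtain ⟨i, rfl⟩ := Subgroup.mem_zpowers_iff.mp ha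
  obtain ⟨j, rfl⟩ := Subgroup.mem_zpowers_iff.mp hb
  exact zpow_mul_comm z i j

lemma triple_cyclic {G : Type*} [Group G] {x y t : G}
    (hxy : ∃ z : G, x ∈ zpowers z ∧ y ∈ zpowers z)
    (hxt : ∃ z : G, x ∈ zpowers z ∧ t ∈ zpowers z)
    (hyt : ∃ z : G, y ∈ zpowers z ∧ t ∈ zpowers z) :
    ∃ v : G, x ∈ zpowers v ∧ y ∈ zpowers v ∧ t ∈ zpowers v := by
  classical
  set B : Subgroup G := Subgroup.closure {x, y, t} with hB
  have hcomm : ∀ a ∈ ({x, y, t} : Set G), ∀ b ∈ ({x, y, t} : Set G), a * b = b * a := by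
    intro a ha b hb
    rcases ha with rfl | rfl | rfl <;> rcases hb with rfl | rfl | rfl
    · rfl
    · exact comm_of_pair hxy
    · exact comm_of_pair hxt
    · exact (comm_of_pair hxy).symm
    · rfl
    · exact comm_of_pair hyt
    · exact (comm_of_pair hxt).symm
    · exact (comm_of_pair hyt).symm
    · rfl
  letI : CommGroup ↥B := Subgroup.closureCommGroupOfComm hcomm
  haveI : Group.FG ↥B := by
    rw [Group.fg_iff_subgroup_fg]
    exact (Subgroup.fg_iff B).mpr ⟨{x, y, t}, rfl, Set.toFinite _⟩
  have hxB : x ∈ B := Subgroup.subset_closure (by simp)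
  have hyB : y ∈ B := Subgroup.subset_closure (by simp)
  have htB : t ∈ B := Subgroup.subset_closure (by simp)
  set x' : ↥B := ⟨x, hxB⟩
  set y' : ↥B := ⟨y, hyB⟩
  set t' : ↥B := ⟨t, htB⟩
  have hgen : Subgroup.closure ({x', y', t'} : Set ↥B) = ⊤ := by
    apply Subgroup.map_injective B.subtype_injective
    rw [MonoidHom.map_closure, ← MonoidHom.range_eq_map, Subgroup.range_subtype]
    have himg : B.subtype '' {x', y', t'} = {x, y, t} := by
      simp [Set.image_insert_eq]; rfl
    rw [himg, hB]
  have pairup : ∀ {a b : G} (ha : a ∈ B) (hb : b ∈ B),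
      (∃ z : G, a ∈ zpowers z ∧ b ∈ zpowers z) →
      ∃ w : ↥B, (⟨a, ha⟩ : ↥B) ∈ zpowers w ∧ (⟨b, hb⟩ : ↥B) ∈ zpowers w := by
    intro a b ha hb hpair
    obtain ⟨z, haz, hbz⟩ := hpair
    have hle : Subgroup.closure {a, b} ≤ zpowers z := by
      refine (Subgroup.closure_le _).mpr ?_
      intro c hc
      rcases hc with rfl | rfl
      · exact haz
      · exact hbz
    obtain ⟨w, hwmem, heq⟩ := exists_generator_of_le hle
    have hwB : w ∈ B := by
      have : Subgroup.closure ({a, b} : Set G) ≤ B := by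
        refine (Subgroup.closure_le _).mpr ?_
        intro c hc
        rcases hc with rfl | rfl
        · exact ha
        · exact hb
      exact this hwmem
    have haw : a ∈ zpowers w := heq ▸ Subgroup.subset_closure (by simp)
    have hbw : b ∈ zpowers w := heq ▸ Subgroup.subset_closure (by simp)
    obtain ⟨i, hi⟩ := Subgroup.mem_zpowers_iff.mp haw
    obtain ⟨j, hj⟩ := Subgroup.mem_zpowers_iff.mp hbw
    refine ⟨⟨w, hwB⟩, Subgroup.mem_zpowers_iff.mpr ⟨i, ?_⟩,
      Subgroup.mem_zpowers_iff.mpr ⟨j, ?_⟩⟩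
    · exact Subtype.ext (by push_cast; exact hi)
    · exact Subtype.ext (by push_cast; exact hj)
  have hcyc : IsCyclic ↥B :=
    isCyclic_of_pairwise_cyclic hgen (pairup hxB hyB hxy) (pairup hxB htB hxt)
      (pairup hyB htB hyt)
  obtain ⟨g, hg⟩ := hcyc.exists_generator
  refine ⟨(g : G), ?_, ?_, ?_⟩
  · obtain ⟨k, hk⟩ := Subgroup.mem_zpowers_iff.mp (hg x')
    exact Subgroup.mem_zpowers_iff.mpr ⟨k, by simpa using congrArg Subtype.val hk⟩
  · obtain ⟨k, hk⟩ := Subgroup.mem_zpowers_iff.mp (hg y')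
    exact Subgroup.mem_zpowers_iff.mpr ⟨k, by simpa using congrArg Subtype.val hk⟩
  · obtain ⟨k, hk⟩ := Subgroup.mem_zpowers_iff.mp (hg t')
    exact Subgroup.mem_zpowers_iff.mpr ⟨k, by simpa using congrArg Subtype.val hk⟩

end AuxLemmas

open Subgroup in
theorem stmt_0 {G : Type*} [Group G] (s : Set G)
    (hs : Maximal (enhancedPowerGraph G).IsClique s) :
    ∃ H : Subgroup G, s = (H : Set G) ∧ (IsCyclic ↥H ∨ IsLocallyCyclicSubgroup H) := by
  classical
  obtain ⟨hclique, hmax⟩ := hs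
  have hadd : ∀ u : G, (∀ b ∈ s, u = b ∨ (enhancedPowerGraph G).Adj u b) → u ∈ s := by
    intro u hu
    have hcl : (enhancedPowerGraph G).IsClique (insert u s) := by
      intro a ha b hb hab
      rcases ha with rfl | ha
      · rcases hb with rfl | hb
        · exact absurd rfl hab
        · exact ((hu b hb).resolve_left hab)
      · rcases hb with rfl | hb
        · exact ((hu a ha).resolve_left (Ne.symm hab)).symm
        · exact hclique ha hb hab
    exact hmax hcl (Set.subset_insert u s) (Set.mem_insert u s)
  have pair_s : ∀ a ∈ s, ∀ b ∈ s, ∃ z : G, a ∈ zpowers z ∧ b ∈ zpowers z := by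
    intro a ha b hb
    by_cases hab : a = b
    · subst hab
      exact ⟨a, mem_zpowers a, mem_zpowers a⟩
    · obtain ⟨-, z, h1, h2⟩ := hclique ha hb hab
      exact ⟨z, h1, h2⟩
  have h1s : (1 : G) ∈ s := by
    refine hadd 1 fun b hb => ?_
    by_cases h : (1 : G) = b
    · exact Or.inl h
    · exact Or.inr ⟨h, b, one_mem _, mem_zpowers b⟩
  have hkey : ∀ a ∈ s, ∀ b ∈ s, ∀ u ∈ Subgroup.closure ({a, b} : Set G), u ∈ s := by
    intro a ha b hb u hu
    refine hadd u fun c hc => ?_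
    obtain ⟨v, hav, hbv, hcv⟩ :=
      triple_cyclic (pair_s a ha b hb) (pair_s a ha c hc) (pair_s b hb c hc)
    have huv : u ∈ zpowers v := by
      have hle : Subgroup.closure ({a, b} : Set G) ≤ zpowers v := by
        refine (Subgroup.closure_le _).mpr ?_
        intro d hd
        rcases hd with rfl | rfl
        · exact hav
        · exact hbv
      exact hle hu
    by_cases huc : u = c
    · exact Or.inl huc
    · exact Or.inr ⟨huc, v, huv, hcv⟩
  have hmemcl : ∀ a b : G, a ∈ Subgroup.closure ({a, b} : Set G) ∧
      b ∈ Subgroup.closure ({a, b} : Set G) :=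
    fun a b => ⟨Subgroup.subset_closure (by simp), Subgroup.subset_closure (by simp)⟩
  refine ⟨{ carrier := s
            one_mem' := h1s
            mul_mem' := fun {a b} ha hb =>
              hkey a ha b hb _ (mul_mem (hmemcl a b).1 (hmemcl a b).2)
            inv_mem' := fun {a} ha =>
              hkey a ha a ha _ (inv_mem (hmemcl a a).1) }, rfl, Or.inr ?_⟩
  intro K hK hFG
  obtain ⟨S, hS⟩ := hFG
  have claim : ∀ S : Finset G, ↑S ⊆ s → ∃ w, w ∈ s ∧
      Subgroup.closure (S : Set G) = zpowers w := by
    intro S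
    induction S using Finset.induction_on with
    | empty =>
      intro _
      refine ⟨1, h1s, ?_⟩
      rw [Finset.coe_empty, Subgroup.closure_empty, Subgroup.zpowers_one_eq_bot]
    | @insert a S' hans IH =>
      intro hsub
      obtain ⟨w, hws, hw⟩ := IH (fun c hc => hsub (Finset.mem_coe.mpr
        (Finset.mem_insert_of_mem hc)))
      have has : a ∈ s := hsub (Finset.mem_coe.mpr (Finset.mem_insert_self a S'))
      have h1 : Subgroup.closure (↑(insert a S') : Set G) = Subgroup.closure {a, w} := by
        rw [Finset.coe_insert, Set.insert_eq, Subgroup.closure_union, hw,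
          show ({a, w} : Set G) = {a} ∪ {w} from rfl, Subgroup.closure_union,
          zpowers_eq_closure]
      obtain ⟨z, haz, hwz⟩ := pair_s a has w hws
      have hle : Subgroup.closure ({a, w} : Set G) ≤ zpowers z := by
        refine (Subgroup.closure_le _).mpr ?_
        intro d hd
        rcases hd with rfl | rfl
        · exact haz
        · exact hwz
      obtain ⟨w', hw'mem, heq⟩ := exists_generator_of_le hle
      exact ⟨w', hkey a has w hws w' hw'mem, by rw [h1, heq]⟩
  have hSsub : ↑S ⊆ s := by
    intro c hc
    have : c ∈ K := hS ▸ Subgroup.subset_closure hc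
    exact hK this
  obtain ⟨w, hws, hw⟩ := claim S hSsub
  have hKw : K = zpowers w := by rw [← hS, hw]
  rw [hKw]
  exact isCyclic_zpowers' w
end

section
/- For torsion groups G and H, the enhanced power graph of the direct product G × H equals the strong product of the enhanced power graphs of G and H if and only if gcd(o(g), o(h)) = 1 for all g ∈ G and h ∈ H. -/
open SimpleGraph

/-- If the orders of `a` and `b` are coprime, then the cyclic subgroup generated by `(a, b)`
contains the product of the cyclic subgroups generated by `a` and `b`. -/
lemma aux_key {G H : Type*} [Group G] [Group H] {a : G} {b : H}
    (hcop : Nat.Coprime (orderOf a) (orderOf b))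
    {x : G} {y : H} (hx : x ∈ Subgroup.zpowers a) (hy : y ∈ Subgroup.zpowers b) :
    (x, y) ∈ Subgroup.zpowers (a, b) := by
  obtain ⟨i, hi⟩ := hx
  obtain ⟨j, hj⟩ := hy
  obtain ⟨u, v, huv⟩ := (Nat.isCoprime_iff_coprime.2 hcop)
  refine ⟨j * (u * (orderOf a)) + i * (v * (orderOf b)), ?_⟩
  have h1 : (a, b) ^ (j * (u * (orderOf a : ℤ)) + i * (v * (orderOf b))) =
      ((a ^ (j * (u * (orderOf a : ℤ)) + i * (v * (orderOf b)))),
       (b ^ (j * (u * (orderOf a : ℤ)) + i * (v * (orderOf b))))) := rfl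
  simp only at *
  rw [h1, Prod.mk.injEq]
  constructor
  · rw [← hi]
    have : (orderOf a : ℤ) ∣ (j * (u * (orderOf a : ℤ)) + i * (v * (orderOf b))) - i := by
      have : (j * (u * (orderOf a : ℤ)) + i * (v * (orderOf b))) - i
          = (j - i) * u * orderOf a + i * ((u * orderOf a + v * orderOf b) - 1) := by ring
      rw [this, huv]
      simp [mul_comm, Dvd.dvd.mul_left]
    have := orderOf_dvd_iff_zpow_eq_one.1 this
    rw [zpow_sub, mul_inv_eq_one] at this
    exact this
  · rw [← hj]
    have : (orderOf b : ℤ) ∣ (j * (u * (orderOf a : ℤ)) + i * (v * (orderOf b))) - j := by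
      have : (j * (u * (orderOf a : ℤ)) + i * (v * (orderOf b))) - j
          = (i - j) * v * orderOf b + j * ((u * orderOf a + v * orderOf b) - 1) := by ring
      rw [this, huv]
      simp [mul_comm, Dvd.dvd.mul_left]
    have := orderOf_dvd_iff_zpow_eq_one.1 this
    rw [zpow_sub, mul_inv_eq_one] at this
    exact this

lemma aux_nat_dvd (m n : ℕ) : m ∣ n * (m / Nat.gcd m n) := by
  set d := Nat.gcd m n with hd
  have hdm : d ∣ m := Nat.gcd_dvd_left _ _
  have hdn : d ∣ n := Nat.gcd_dvd_right _ _
  have h1 : d * (m / d) = m := Nat.mul_div_cancel' hdm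
  have h2 : d * (n / d) = n := Nat.mul_div_cancel' hdn
  refine ⟨n / d, ?_⟩
  calc n * (m / d) = (d * (n / d)) * (m / d) := by rw [h2]
    _ = (n / d) * (d * (m / d)) := by ring
    _ = m * (n / d) := by rw [h1]; ring

lemma aux_nat_false {m n p : ℕ} (hm : 0 < m) (hp : p.Prime)
    (h1 : p ∣ m / Nat.gcd m n) (h2 : p ∣ n / Nat.gcd m n) : False := by
  set d := Nat.gcd m n with hd
  have hd0 : 0 < d := Nat.gcd_pos_of_pos_left n hm
  have hdm : d ∣ m := Nat.gcd_dvd_left _ _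
  have hdn : d ∣ n := Nat.gcd_dvd_right _ _
  have h1' : d * p ∣ m := (Nat.dvd_div_iff_mul_dvd hdm).1 h1
  have h2' : d * p ∣ n := (Nat.dvd_div_iff_mul_dvd hdn).1 h2
  have : d * p ∣ d := Nat.dvd_gcd h1' h2'
  have hle := Nat.le_of_dvd hd0 this
  have := hp.two_le
  nlinarith

theorem stmt_1 {G H : Type*} [Group G] [Group H]
    (hG : Monoid.IsTorsion G) (hH : Monoid.IsTorsion H) :
    enhancedPowerGraph (G × H) = strongProd (enhancedPowerGraph G) (enhancedPowerGraph H) ↔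
      ∀ (g : G) (h : H), Nat.gcd (orderOf g) (orderOf h) = 1 := by
  constructor
  · intro heq g h
    by_cases hg : g = 1
    · simp [hg]
    by_cases hh : h = 1
    · simp [hh]
    have hadj : (strongProd (enhancedPowerGraph G) (enhancedPowerGraph H)).Adj (g, 1) (1, h) :=
      Or.inr (Or.inr ⟨⟨hg, g, Subgroup.mem_zpowers g, Subgroup.one_mem _⟩,
        ⟨Ne.symm hh, h, Subgroup.one_mem _, Subgroup.mem_zpowers h⟩⟩)
    rw [← heq] at hadj
    obtain ⟨hne, ⟨a, b⟩, hgz, hhz⟩ := hadj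
    obtain ⟨i, hi⟩ := hgz
    obtain ⟨j, hj⟩ := hhz
    simp only at hi hj
    have hi1 : a ^ i = g := congrArg Prod.fst hi
    have hi2 : b ^ i = 1 := congrArg Prod.snd hi
    have hj1 : a ^ j = 1 := congrArg Prod.fst hj
    have hj2 : b ^ j = h := congrArg Prod.snd hj
    set d := Nat.gcd (orderOf a) (orderOf b) with hd
    -- order of g divides orderOf a / d
    have hobi : (orderOf b : ℤ) ∣ i := orderOf_dvd_iff_zpow_eq_one.2 hi2
    have hoaj : (orderOf a : ℤ) ∣ j := orderOf_dvd_iff_zpow_eq_one.2 hj1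
    have hga : orderOf g ∣ orderOf a / d := by
      apply orderOf_dvd_of_pow_eq_one
      rw [← hi1, ← zpow_natCast, ← zpow_mul]
      apply orderOf_dvd_iff_zpow_eq_one.1
      obtain ⟨t, ht⟩ := hobi
      rw [ht]
      have : (orderOf a : ℤ) ∣ (orderOf b : ℤ) * ((orderOf a / d : ℕ) : ℤ) := by
        exact_mod_cast Int.natCast_dvd_natCast.2 (aux_nat_dvd (orderOf a) (orderOf b))
      calc (orderOf a : ℤ) ∣ (orderOf b : ℤ) * ((orderOf a / d : ℕ) : ℤ) := this
        _ ∣ (orderOf b : ℤ) * t * ((orderOf a / d : ℕ) : ℤ) := by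
            rw [mul_comm ((orderOf b : ℤ)) t, mul_assoc]; exact Dvd.dvd.mul_left dvd_rfl t
    have hhb : orderOf h ∣ orderOf b / d := by
      apply orderOf_dvd_of_pow_eq_one
      rw [← hj2, ← zpow_natCast, ← zpow_mul]
      apply orderOf_dvd_iff_zpow_eq_one.1
      obtain ⟨t, ht⟩ := hoaj
      rw [ht]
      have : (orderOf b : ℤ) ∣ (orderOf a : ℤ) * ((orderOf b / d : ℕ) : ℤ) := by
        have := aux_nat_dvd (orderOf b) (orderOf a)
        rw [Nat.gcd_comm] at this
        exact_mod_cast Int.natCast_dvd_natCast.2 this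
      calc (orderOf b : ℤ) ∣ (orderOf a : ℤ) * ((orderOf b / d : ℕ) : ℤ) := this
        _ ∣ (orderOf a : ℤ) * t * ((orderOf b / d : ℕ) : ℤ) := by
            rw [mul_comm ((orderOf a : ℤ)) t, mul_assoc]; exact Dvd.dvd.mul_left dvd_rfl t
    by_contra hcon
    obtain ⟨p, hp, hpg, hph⟩ := Nat.Prime.not_coprime_iff_dvd.1 hcon
    exact aux_nat_false ((hG a).orderOf_pos) hp (hpg.trans hga) (hph.trans hhb)
  · intro hcop
    ext ⟨g1, h1⟩ ⟨g2, h2⟩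
    constructor
    · rintro ⟨hne, ⟨a, b⟩, hxz, hyz⟩
      obtain ⟨i, hi⟩ := hxz
      obtain ⟨j, hj⟩ := hyz
      simp only at hi hj
      have ha1 : g1 ∈ Subgroup.zpowers a := ⟨i, congrArg Prod.fst hi⟩
      have hb1 : h1 ∈ Subgroup.zpowers b := ⟨i, congrArg Prod.snd hi⟩
      have ha2 : g2 ∈ Subgroup.zpowers a := ⟨j, congrArg Prod.fst hj⟩
      have hb2 : h2 ∈ Subgroup.zpowers b := ⟨j, congrArg Prod.snd hj⟩
      by_cases hgg : g1 = g2
      · have hhh : h1 ≠ h2 := fun he => hne (by rw [hgg, he])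
        exact Or.inl ⟨hgg, hhh, b, hb1, hb2⟩
      by_cases hhh : h1 = h2
      · exact Or.inr (Or.inl ⟨⟨hgg, a, ha1, ha2⟩, hhh⟩)
      · exact Or.inr (Or.inr ⟨⟨hgg, a, ha1, ha2⟩, ⟨hhh, b, hb1, hb2⟩⟩)
    · rintro (⟨hgg, hhh, b, hb1, hb2⟩ | ⟨⟨hgg, a, ha1, ha2⟩, hhh⟩ |
        ⟨⟨hgg, a, ha1, ha2⟩, hhh, b, hb1, hb2⟩)
      · refine ⟨fun he => hhh (congrArg Prod.snd he), (g1, b), ?_, ?_⟩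
        · exact aux_key (hcop g1 b) (Subgroup.mem_zpowers g1) hb1
        · simp only at hgg
          rw [← hgg] at *
          exact aux_key (hcop g1 b) (Subgroup.mem_zpowers g1) hb2
      · refine ⟨fun he => hgg (congrArg Prod.fst he), (a, h1), ?_, ?_⟩
        · exact aux_key (hcop a h1) ha1 (Subgroup.mem_zpowers h1)
        · simp only at hhh
          rw [← hhh] at *
          exact aux_key (hcop a h1) ha2 (Subgroup.mem_zpowers h1)
      · exact ⟨fun he => hgg (congrArg Prod.fst he), (a, b),
          aux_key (hcop a b) ha1 hb1, aux_key (hcop a b) ha2 hb2⟩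
end

section
/- Let G be a finite group and define x ≡ₑ y iff x and y have equal closed neighborhoods in the enhanced power graph of G. Then for every x ∈ G, the subgroup generated by the ≡ₑ-class of x equals the intersection of all maximal cliques of the enhanced power graph containing that class, and this intersection is a cyclic subgroup of G. -/
open SimpleGraph

set_option linter.unusedSectionVars false

section helpers
variable {G : Type*} [Group G] [Fintype G]

lemma mem_closedNbhd_iff (x z : G) :
    z ∈ closedNbhd (enhancedPowerGraph G) x ↔
      ∃ w : G, z ∈ Subgroup.zpowers w ∧ x ∈ Subgroup.zpowers w := by
  constructor
  · rintro (h | h)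
    · obtain ⟨-, w, hx, hz⟩ := h
      exact ⟨w, hz, hx⟩
    · exact ⟨x, by simp_all, Subgroup.mem_zpowers x⟩
  · rintro ⟨w, hz, hx⟩
    by_cases h : z = x
    · right; simp [h]
    · left; exact ⟨(Ne.symm h), w, hx, hz⟩

lemma zpowers_isCyclic (g : G) : IsCyclic ↥(Subgroup.zpowers g) := by
  refine ⟨⟨g, Subgroup.mem_zpowers g⟩, ?_⟩
  rintro ⟨y, hy⟩
  obtain ⟨k, hk⟩ := Subgroup.mem_zpowers_iff.1 hy
  exact Subgroup.mem_zpowers_iff.2 ⟨k, by ext; simpa using hk⟩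

lemma exists_maxCyclic (w : G) :
    ∃ M : Subgroup G, IsMaxCyclic M ∧ Subgroup.zpowers w ≤ M := by
  have hfin : ({K : Subgroup G | (∃ g : G, K = Subgroup.zpowers g) ∧
      Subgroup.zpowers w ≤ K}).Finite := Set.toFinite _
  have hne : ({K : Subgroup G | (∃ g : G, K = Subgroup.zpowers g) ∧
      Subgroup.zpowers w ≤ K}).Nonempty := ⟨Subgroup.zpowers w, ⟨w, rfl⟩, le_rfl⟩
  obtain ⟨M, ⟨hMc, hMw⟩, hmax⟩ := Set.Finite.exists_maximalFor id _ hfin hne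
  refine ⟨M, ⟨hMc, fun K hK hMK => ?_⟩, hMw⟩
  have := hmax ⟨hK, le_trans hMw hMK⟩ hMK
  simp only [id] at this
  exact this

lemma maxCyclic_maximal_clique (K : Subgroup G) (hK : IsMaxCyclic K) :
    Maximal (enhancedPowerGraph G).IsClique (↑K : Set G) := by
  obtain ⟨g, hg⟩ := hK.1
  constructor
  · intro a ha b hb hab
    exact ⟨hab, g, by rw [hg] at ha hb; exact ⟨ha, hb⟩⟩
  · intro t ht hKt a hat
    have hg_mem : g ∈ (↑K : Set G) := by rw [hg]; exact Subgroup.mem_zpowers g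
    by_cases hag : a = g
    · rw [hag]; exact hg_mem
    · obtain ⟨-, w, haw, hgw⟩ := ht hat (hKt hg_mem) hag
      have h1 : K ≤ Subgroup.zpowers w := by
        rw [hg]; exact (Subgroup.zpowers_le).2 hgw
      have h2 : Subgroup.zpowers w ≤ K := hK.2 ⟨w, rfl⟩ h1
      exact h2 haw

end helpers

theorem stmt_4 {G : Type*} [Group G] [Fintype G] (x : G) :
    (↑(Subgroup.closure
        {y : G | closedNbhd (enhancedPowerGraph G) y = closedNbhd (enhancedPowerGraph G) x}) : Set G) =
      ⋂₀ {s : Set G | Maximal (enhancedPowerGraph G).IsClique s ∧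
        {y : G | closedNbhd (enhancedPowerGraph G) y = closedNbhd (enhancedPowerGraph G) x} ⊆ s} ∧
    ∃ c : G, Subgroup.closure
        {y : G | closedNbhd (enhancedPowerGraph G) y = closedNbhd (enhancedPowerGraph G) x} =
      Subgroup.zpowers c := by
  set cl := {y : G | closedNbhd (enhancedPowerGraph G) y = closedNbhd (enhancedPowerGraph G) x}
    with hcl
  -- the intersection of maximal cyclic subgroups containing x
  set D : Subgroup G := sInf {K : Subgroup G | IsMaxCyclic K ∧ x ∈ K} with hD
  have hxD : x ∈ D := Subgroup.mem_sInf.2 fun K hK => hK.2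
  obtain ⟨M₀, hM₀, hxM₀⟩ := exists_maxCyclic x
  have hxM₀' : x ∈ M₀ := hxM₀ (Subgroup.mem_zpowers x)
  have hDM₀ : D ≤ M₀ := sInf_le ⟨hM₀, hxM₀'⟩
  obtain ⟨g₀, hg₀⟩ := hM₀.1
  -- D is cyclic
  have hcyc : IsCyclic ↥D := by
    haveI : IsCyclic ↥M₀ := by rw [hg₀]; exact zpowers_isCyclic g₀
    exact isCyclic_of_surjective (Subgroup.subgroupOfEquivOfLe hDM₀)
      (Subgroup.subgroupOfEquivOfLe hDM₀).surjective
  obtain ⟨c', hc'⟩ := hcyc.exists_generator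
  have hcD : Subgroup.zpowers (c' : G) = D := by
    apply le_antisymm
    · exact (Subgroup.zpowers_le).2 c'.2
    · intro d hd
      obtain ⟨k, hk⟩ := Subgroup.mem_zpowers_iff.1 (hc' ⟨d, hd⟩)
      exact Subgroup.mem_zpowers_iff.2 ⟨k, by
        have := congrArg (Subtype.val) hk
        simpa using this⟩
  set c : G := (c' : G) with hc
  have hcD' : c ∈ D := c'.2
  -- c is in the equivalence class of x
  have hc_cl : c ∈ cl := by
    rw [hcl, Set.mem_setOf_eq]
    ext z
    rw [mem_closedNbhd_iff, mem_closedNbhd_iff]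
    constructor
    · rintro ⟨w, hzw, hcw⟩
      refine ⟨w, hzw, ?_⟩
      have : D ≤ Subgroup.zpowers w := by rw [← hcD]; exact Subgroup.zpowers_le.2 hcw
      exact this hxD
    · rintro ⟨w, hzw, hxw⟩
      obtain ⟨M, hM, hwM⟩ := exists_maxCyclic w
      have hxM : x ∈ M := hwM hxw
      have hDM : D ≤ M := sInf_le ⟨hM, hxM⟩
      obtain ⟨g, hg⟩ := hM.1
      exact ⟨g, by rw [← hg]; exact hwM hzw, by rw [← hg]; exact hDM hcD'⟩
  -- the class is contained in D
  have hclD : cl ⊆ ↑D := by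
    intro y hy
    refine Subgroup.mem_sInf.2 fun K hK => ?_
    obtain ⟨⟨hKc, hKmax⟩, hxK⟩ := hK
    obtain ⟨g, hg⟩ := hKc
    have hgNx : g ∈ closedNbhd (enhancedPowerGraph G) x :=
      (mem_closedNbhd_iff x g).2 ⟨g, Subgroup.mem_zpowers g, by rw [← hg]; exact hxK⟩
    have hgNy : g ∈ closedNbhd (enhancedPowerGraph G) y := by
      rw [Set.mem_setOf_eq] at hy; rw [hy]; exact hgNx
    obtain ⟨w, hgw, hyw⟩ := (mem_closedNbhd_iff y g).1 hgNy
    have h1 : K ≤ Subgroup.zpowers w := by rw [hg]; exact Subgroup.zpowers_le.2 hgw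
    have h2 : Subgroup.zpowers w ≤ K := hKmax ⟨w, rfl⟩ h1
    exact h2 hyw
  -- closure of the class is D
  have hclosD : Subgroup.closure cl = D := by
    apply le_antisymm
    · exact (Subgroup.closure_le D).2 hclD
    · rw [← hcD]
      refine Subgroup.zpowers_le.2 ?_
      exact Subgroup.subset_closure hc_cl
  have hclosD' : Subgroup.closure cl = Subgroup.zpowers c := by rw [hclosD, hcD]
  refine ⟨?_, c, hclosD'⟩
  apply Set.Subset.antisymm
  · -- closure ⊆ intersection
    intro z hz
    rintro s ⟨hs_max, hs_cl⟩
    -- s ∪ zpowers c is a clique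
    have hcs : c ∈ s := hs_cl hc_cl
    have hclique : (enhancedPowerGraph G).IsClique (s ∪ ↑(Subgroup.zpowers c)) := by
      rintro a (ha | ha) b (hb | hb) hab
      · exact hs_max.1 ha hb hab
      · refine ⟨hab, ?_⟩
        by_cases hac : a = c
        · exact ⟨c, by rw [hac]; exact Subgroup.mem_zpowers c, hb⟩
        · obtain ⟨-, w, haw, hcw⟩ := hs_max.1 ha hcs hac
          exact ⟨w, haw, (Subgroup.zpowers_le.2 hcw) hb⟩
      · refine ⟨hab, ?_⟩
        by_cases hbc : b = c
        · exact ⟨c, ha, by rw [hbc]; exact Subgroup.mem_zpowers c⟩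
        · obtain ⟨-, w, hbw, hcw⟩ := hs_max.1 hb hcs hbc
          exact ⟨w, (Subgroup.zpowers_le.2 hcw) ha, hbw⟩
      · exact ⟨hab, c, ha, hb⟩
    have hsub : ↑(Subgroup.zpowers c) ⊆ s :=
      (Set.union_subset_iff.1 (hs_max.2 hclique Set.subset_union_left)).2
    apply hsub
    rw [← hclosD']
    exact hz
  · -- intersection ⊆ closure
    intro z hz
    have : z ∈ (↑D : Set G) := by
      refine Subgroup.mem_sInf.2 fun K hK => ?_
      have hKclique := maxCyclic_maximal_clique K hK.1
      have hclK : cl ⊆ ↑K := fun y hy => (sInf_le hK : D ≤ K) (hclD hy)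
      exact hz (↑K) ⟨hKclique, hclK⟩
    rwa [hclosD]
end

section
/- If G and H are finite groups with isomorphic enhanced power graphs, then their directed power graphs are isomorphic. -/
open SimpleGraph

namespace EPGAux

open Subgroup

variable {G : Type*} [Group G] [Fintype G]

/-- Two elements lie in a common cyclic subgroup. -/
def Rel (x y : G) : Prop := ∃ z : G, x ∈ zpowers z ∧ y ∈ zpowers z

lemma rel_self (x : G) : Rel x x := ⟨x, mem_zpowers x, mem_zpowers x⟩

lemma adj_iff {x y : G} : (enhancedPowerGraph G).Adj x y ↔ x ≠ y ∧ Rel x y := Iff.rfl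

lemma rel_iff_maxCyclic {x y : G} :
    Rel x y ↔ ∃ M : Subgroup G, IsMaxCyclic M ∧ x ∈ M ∧ y ∈ M := by
  constructor
  · rintro ⟨z, hx, hy⟩
    obtain ⟨M, hle, hmax⟩ := Finite.exists_le_maximal
      (p := fun K : Subgroup G => ∃ g : G, K = zpowers g) (a := zpowers z) ⟨z, rfl⟩
    exact ⟨M, hmax, hle hx, hle hy⟩
  · rintro ⟨M, hM, hx, hy⟩
    obtain ⟨g, rfl⟩ := hM.1
    exact ⟨g, hx, hy⟩

/-- The intersection of all maximal cyclic subgroups containing `x`, as a set. -/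
def cset (x : G) : Set G := {y | ∀ z, Rel x z → Rel y z}

lemma mem_cset_self (x : G) : x ∈ cset x := fun _ h => h

lemma cset_subset {x y : G} (h : y ∈ cset x) : cset y ⊆ cset x :=
  fun _ hu z hz => hu z (h z hz)

lemma cset_subset_of_maxCyclic {x : G} {M : Subgroup G} (hM : IsMaxCyclic M) (hx : x ∈ M) :
    cset x ⊆ (M : Set G) := by
  intro y hy
  obtain ⟨g, hg⟩ := hM.1
  have hrel : Rel x g := ⟨g, by rw [hg] at hx; exact hx, mem_zpowers g⟩
  obtain ⟨w, hyw, hgw⟩ := hy g hrel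
  have hle : M ≤ zpowers w := by rw [hg]; exact zpowers_le.mpr hgw
  have hle2 : zpowers w ≤ M := hM.2 ⟨w, rfl⟩ hle
  exact hle2 hyw

lemma mem_cset_of_forall {x y : G}
    (h : ∀ M : Subgroup G, IsMaxCyclic M → x ∈ M → y ∈ M) : y ∈ cset x := by
  intro z hz
  obtain ⟨M, hM, hx, hzM⟩ := rel_iff_maxCyclic.mp hz
  obtain ⟨g, hg⟩ := hM.1
  exact ⟨g, by rw [← hg]; exact h M hM hx, by rw [← hg]; exact hzM⟩

/-- The intersection of all maximal cyclic subgroups containing `x`, as a subgroup. -/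
noncomputable def csub (x : G) : Subgroup G :=
  ⨅ M ∈ {M : Subgroup G | IsMaxCyclic M ∧ x ∈ M}, M

lemma mem_csub {x y : G} : y ∈ csub x ↔ y ∈ cset x := by
  simp only [csub, Subgroup.mem_iInf, Set.mem_setOf_eq]
  constructor
  · intro h
    exact mem_cset_of_forall (fun M hM hx => h M ⟨hM, hx⟩)
  · rintro h M ⟨hM, hx⟩
    exact cset_subset_of_maxCyclic hM hx h

lemma isCyclic_zpowers (g : G) : IsCyclic (zpowers g : Subgroup G) := by
  refine ⟨⟨⟨g, mem_zpowers g⟩, fun x => ?_⟩⟩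
  obtain ⟨k, hk⟩ := mem_zpowers_iff.mp x.2
  exact mem_zpowers_iff.mpr ⟨k, Subtype.ext (by simpa using hk)⟩

lemma isCyclic_csub (x : G) : IsCyclic (csub x) := by
  obtain ⟨M, hle, hmax⟩ := Finite.exists_le_maximal
    (p := fun K : Subgroup G => ∃ g : G, K = zpowers g) (a := zpowers x) ⟨x, rfl⟩
  have hxM : x ∈ M := hle (mem_zpowers x)
  have hsub : csub x ≤ M := by
    intro u hu
    exact cset_subset_of_maxCyclic hmax hxM (mem_csub.mp hu)
  obtain ⟨g, hg⟩ := hmax.1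
  haveI : IsCyclic (zpowers g : Subgroup G) := isCyclic_zpowers g
  rw [hg] at hsub
  exact Subgroup.isCyclic_of_le hsub

/-- In a finite cyclic group, any element whose order divides the cardinality of a
subgroup belongs to that subgroup. -/
lemma mem_of_orderOf_dvd {K : Type*} [Group K] [Finite K] [IsCyclic K]
    (A : Subgroup K) {g : K} (h : orderOf g ∣ Nat.card A) : g ∈ A := by
  classical
  letI := Fintype.ofFinite K
  set n := Nat.card A with hn
  have hpos : 0 < n := Nat.card_pos
  set T := Finset.univ.filter (fun a : K => a ^ n = 1) with hT
  have hTcard : T.card ≤ n := IsCyclic.card_pow_eq_one_le hpos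
  have hsub : (A : Set K).toFinset ⊆ T := by
    intro a ha
    rw [Set.mem_toFinset, SetLike.mem_coe] at ha
    rw [hT, Finset.mem_filter]
    refine ⟨Finset.mem_univ a, ?_⟩
    have h1 : (⟨a, ha⟩ : A) ^ n = 1 := by
      rw [hn]
      exact pow_card_eq_one'
    have := congrArg (Subtype.val) h1
    simpa using this
  have hAcard : (A : Set K).toFinset.card = n := by
    rw [Set.toFinset_card, ← Nat.card_eq_fintype_card, hn]
    exact Nat.card_congr (Equiv.subtypeEquivRight (fun a => by simp))
  have heq : (A : Set K).toFinset = T :=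
    Finset.eq_of_subset_of_card_le hsub (hTcard.trans_eq hAcard.symm)
  have hg : g ∈ T := by
    rw [hT, Finset.mem_filter]
    exact ⟨Finset.mem_univ g, orderOf_dvd_iff_pow_eq_one.mp h⟩
  rw [← heq, Set.mem_toFinset, SetLike.mem_coe] at hg
  exact hg

lemma mem_zpowers_iff' {x y : G} :
    y ∈ zpowers x ↔ y ∈ cset x ∧ orderOf y ∣ orderOf x := by
  constructor
  · intro h
    refine ⟨mem_cset_of_forall (fun M _ hx => (zpowers_le.mpr hx) h),
      orderOf_dvd_of_mem_zpowers h⟩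
  · rintro ⟨hy, hd⟩
    have hx : x ∈ csub x := mem_csub.mpr (mem_cset_self x)
    have hy' : y ∈ csub x := mem_csub.mpr hy
    haveI := isCyclic_csub x
    have hmem : (⟨y, hy'⟩ : csub x) ∈ zpowers (⟨x, hx⟩ : csub x) := by
      apply mem_of_orderOf_dvd
      rw [Nat.card_zpowers, Subgroup.orderOf_mk, Subgroup.orderOf_mk]
      exact hd
    obtain ⟨k, hk⟩ := mem_zpowers_iff.mp hmem
    refine mem_zpowers_iff.mpr ⟨k, ?_⟩
    have := congrArg (Subtype.val) hk
    simpa using this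

section Iso

variable {H : Type*} [Group H] [Fintype H]
variable (φ : enhancedPowerGraph G ≃g enhancedPowerGraph H)

lemma rel_map {x y : G} : Rel (φ x) (φ y) ↔ Rel x y := by
  rcases eq_or_ne x y with rfl | hne
  · exact ⟨fun _ => rel_self x, fun _ => rel_self (φ x)⟩
  · have hadj := φ.map_adj_iff (v := x) (w := y)
    constructor
    · intro h
      exact (adj_iff.mp (hadj.mp (adj_iff.mpr ⟨fun hc => hne (φ.toEquiv.injective hc), h⟩))).2
    · intro h
      exact (adj_iff.mp (hadj.mpr (adj_iff.mpr ⟨hne, h⟩))).2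

lemma mem_cset_map {x y : G} : φ y ∈ cset (φ x) ↔ y ∈ cset x := by
  constructor
  · intro h z hz
    exact (rel_map φ).mp (h (φ z) ((rel_map φ).mpr hz))
  · intro h z' hz'
    obtain ⟨z, rfl⟩ := φ.toEquiv.surjective z'
    exact (rel_map φ).mpr (h z ((rel_map φ).mp hz'))

lemma cset_map (x : G) : cset (φ x) = (φ : G → H) '' cset x := by
  ext u
  obtain ⟨y, rfl⟩ := φ.toEquiv.surjective u
  rw [show φ.toEquiv y = φ y from rfl, mem_cset_map φ]
  exact (Function.Injective.mem_set_image (f := (φ : G → H)) φ.toEquiv.injective).symm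

lemma card_csub_map (x : G) : Nat.card (csub x) = Nat.card (csub (φ x)) := by
  have h1 : Nat.card (csub x) = Nat.card (cset x) :=
    Nat.card_congr (Equiv.subtypeEquivRight fun _ => mem_csub)
  have h2 : Nat.card (csub (φ x)) = Nat.card (cset (φ x)) :=
    Nat.card_congr (Equiv.subtypeEquivRight fun _ => mem_csub)
  rw [h1, h2, cset_map φ x]
  exact Nat.card_congr (φ.toEquiv.image (cset x))

end Iso

variable {H : Type*} [Group H] [Fintype H]

open scoped Classical in
/-- Transfer an element through a chosen isomorphism between two subgroups. -/
noncomputable def emap (C : Subgroup G) (D : Subgroup H) : G → H :=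
  fun g => if h : g ∈ C ∧ Nonempty (C ≃* D) then ((Classical.choice h.2) ⟨g, h.1⟩ : D) else 1

lemma emap_spec {C : Subgroup G} {D : Subgroup H} {g : G} (hg : g ∈ C)
    (hne : Nonempty (C ≃* D)) :
    emap C D g = ((Classical.choice hne) ⟨g, hg⟩ : D) := by
  unfold emap
  rw [dif_pos (show g ∈ C ∧ Nonempty (C ≃* D) from ⟨hg, hne⟩)]

lemma emap_mem {C : Subgroup G} {D : Subgroup H} {g : G} (hg : g ∈ C)
    (hne : Nonempty (C ≃* D)) : emap C D g ∈ D := by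
  rw [emap_spec hg hne]; exact SetLike.coe_mem _

lemma emap_orderOf {C : Subgroup G} {D : Subgroup H} {g : G} (hg : g ∈ C)
    (hne : Nonempty (C ≃* D)) : orderOf (emap C D g) = orderOf g := by
  rw [emap_spec hg hne, Subgroup.orderOf_coe,
    MulEquiv.orderOf_eq (Classical.choice hne) ⟨g, hg⟩, Subgroup.orderOf_mk]

lemma emap_inj {C : Subgroup G} {D : Subgroup H} {g g' : G} (hg : g ∈ C) (hg' : g' ∈ C)
    (hne : Nonempty (C ≃* D)) (h : emap C D g = emap C D g') : g = g' := by
  rw [emap_spec hg hne, emap_spec hg' hne] at h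
  have h2 := (Classical.choice hne).injective (Subtype.coe_injective h)
  exact congrArg Subtype.val h2

section E0

variable (φ : enhancedPowerGraph G ≃g enhancedPowerGraph H)

lemma csub_nonempty_iso (x : G) : Nonempty ((csub x : Subgroup G) ≃* (csub (φ x) : Subgroup H)) := by
  haveI := isCyclic_csub x
  haveI := isCyclic_csub (φ x)
  exact ⟨mulEquivOfCyclicCardEq (card_csub_map φ x)⟩

/-- The candidate isomorphism of directed power graphs. -/
noncomputable def e0 (x : G) : H := emap (csub x) (csub (φ x)) x

lemma e0_mem (x : G) : e0 φ x ∈ cset (φ x) :=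
  mem_csub.mp (emap_mem (mem_csub.mpr (mem_cset_self x)) (csub_nonempty_iso φ x))

lemma e0_orderOf (x : G) : orderOf (e0 φ x) = orderOf x :=
  emap_orderOf (mem_csub.mpr (mem_cset_self x)) (csub_nonempty_iso φ x)

lemma cset_e0 (x : G) : cset (e0 φ x) = cset (φ x) := by
  have hmem : e0 φ x ∈ cset (φ x) := e0_mem φ x
  obtain ⟨w, hw, hφw⟩ : ∃ w, w ∈ cset x ∧ φ w = e0 φ x := by
    have h := hmem
    rw [cset_map φ x] at h
    obtain ⟨w, hw, hφw⟩ := h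
    exact ⟨w, hw, hφw⟩
  -- orderOf x divides the cardinality of csub w
  have h1 : orderOf (e0 φ x) ∣ Nat.card (csub (φ w)) := by
    apply Subgroup.orderOf_dvd_natCard
    rw [← hφw] at hmem ⊢
    exact mem_csub.mpr (mem_cset_self (φ w))
  have h3 : orderOf x ∣ Nat.card (csub w) := by
    rw [← e0_orderOf φ x, card_csub_map φ w]
    exact h1
  -- hence x ∈ csub w
  have hx : x ∈ csub x := mem_csub.mpr (mem_cset_self x)
  have hsub : csub w ≤ csub x := fun u hu => mem_csub.mpr (cset_subset hw (mem_csub.mp hu))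
  haveI := isCyclic_csub x
  have hxw : x ∈ csub w := by
    have hm : (⟨x, hx⟩ : csub x) ∈ (csub w).subgroupOf (csub x) := by
      apply mem_of_orderOf_dvd
      have hcA : Nat.card ((csub w).subgroupOf (csub x)) = Nat.card (csub w) :=
        Nat.card_congr (Subgroup.subgroupOfEquivOfLe hsub).toEquiv
      rw [hcA, Subgroup.orderOf_mk]
      exact h3
    exact Subgroup.mem_subgroupOf.mp hm
  have hcc : cset x = cset w :=
    Set.Subset.antisymm (cset_subset (mem_csub.mp hxw)) (cset_subset hw)
  calc cset (e0 φ x) = cset (φ w) := by rw [hφw]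
    _ = (φ : G → H) '' cset w := cset_map φ w
    _ = (φ : G → H) '' cset x := by rw [← hcc]
    _ = cset (φ x) := (cset_map φ x).symm

lemma e0_inj : Function.Injective (e0 φ) := by
  intro x x' hEq
  have hc : cset (φ x) = cset (φ x') := by
    rw [← cset_e0 φ x, ← cset_e0 φ x', hEq]
  have hcc : cset x = cset x' := by
    have himg : (φ : G → H) '' cset x = (φ : G → H) '' cset x' := by
      rw [← cset_map, ← cset_map, hc]
    exact Set.image_injective.mpr φ.toEquiv.injective himg
  have h1 : csub x = csub x' := by
    ext u; rw [mem_csub, mem_csub, hcc]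
  have h2 : csub (φ x) = csub (φ x') := by
    ext u; rw [mem_csub, mem_csub, hc]
  rw [e0, e0, h1, h2] at hEq
  exact emap_inj (h1 ▸ mem_csub.mpr (mem_cset_self x)) (mem_csub.mpr (mem_cset_self x'))
    (csub_nonempty_iso φ x') hEq

lemma e0_bij : Function.Bijective (e0 φ) := by
  rw [Fintype.bijective_iff_injective_and_card]
  exact ⟨e0_inj φ, Fintype.card_congr φ.toEquiv⟩

end E0

end EPGAux

theorem stmt_9 {G H : Type*} [Group G] [Group H] [Fintype G] [Fintype H]
    (h : Nonempty (enhancedPowerGraph G ≃g enhancedPowerGraph H)) :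
    ∃ e : G ≃ H, ∀ x y : G,
      (x ≠ y ∧ y ∈ Subgroup.zpowers x) ↔ (e x ≠ e y ∧ e y ∈ Subgroup.zpowers (e x)) := by
  obtain ⟨φ⟩ := h
  open EPGAux in
  refine ⟨Equiv.ofBijective (e0 φ) (e0_bij φ), fun x y => ?_⟩
  simp only [Equiv.ofBijective_apply]
  have hinj := e0_inj φ
  constructor
  · rintro ⟨hne, hmem⟩
    refine ⟨fun hc => hne (hinj hc), ?_⟩
    rw [mem_zpowers_iff'] at hmem ⊢
    obtain ⟨hcs, hdvd⟩ := hmem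
    refine ⟨?_, by rw [e0_orderOf φ x, e0_orderOf φ y]; exact hdvd⟩
    rw [cset_e0 φ x, cset_map φ x]
    have h5 : e0 φ y ∈ (φ : G → H) '' cset y := by
      rw [← cset_map φ y]; exact e0_mem φ y
    exact Set.image_mono (cset_subset hcs) h5
  · rintro ⟨hne, hmem⟩
    refine ⟨fun hc => hne (congrArg _ hc), ?_⟩
    rw [mem_zpowers_iff'] at hmem ⊢
    obtain ⟨hcs, hdvd⟩ := hmem
    refine ⟨?_, by rw [e0_orderOf φ x, e0_orderOf φ y] at hdvd; exact hdvd⟩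
    rw [cset_e0 φ x] at hcs
    have h5 : cset (e0 φ y) ⊆ cset (φ x) := cset_subset hcs
    rw [cset_e0 φ y, cset_map φ y, cset_map φ x] at h5
    have h6 : cset y ⊆ cset x :=
      (Set.image_subset_image_iff φ.toEquiv.injective).mp h5
    exact h6 (mem_cset_self y)
end

section
/- Every isomorphism between the (undirected) power graphs of two finite groups G and H is also an isomorphism between their enhanced power graphs. -/
open SimpleGraph

open Subgroup

set_option linter.unusedSectionVars false
set_option linter.unusedVariables false

namespace PGAux

variable {K : Type*} [Group K] [Fintype K]

/-- Comparability: one is a power of the other. -/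
def cmp (u v : K) : Prop := u ∈ zpowers v ∨ v ∈ zpowers u

lemma cmp.symm {u v : K} (h : cmp u v) : cmp v u := Or.symm h

lemma cmp_self (u : K) : cmp u u := Or.inl (mem_zpowers u)

lemma cmp_one_left (u : K) : cmp 1 u := Or.inl (one_mem _)

lemma cmp_one_right (u : K) : cmp u 1 := Or.inr (one_mem _)

lemma cmp_of_mem {u v : K} (h : u ∈ zpowers v) : cmp u v := Or.inl h

/-- Key divisibility lemma inside a cyclic subgroup. -/
lemma mem_zpowers_of_orderOf_dvd {z u w : K} (hu : u ∈ zpowers z) (hw : w ∈ zpowers z)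
    (h : orderOf u ∣ orderOf w) : u ∈ zpowers w := by
  classical
  obtain ⟨i, rfl⟩ := (isOfFinOrder_of_finite z).mem_powers_iff_mem_zpowers.mpr hu
  obtain ⟨j, rfl⟩ := (isOfFinOrder_of_finite z).mem_powers_iff_mem_zpowers.mpr hw
  set m := orderOf z with hm
  have hmpos : 0 < m := orderOf_pos z
  have hoi : orderOf (z ^ i) = m / Nat.gcd m i := orderOf_pow z
  have hoj : orderOf (z ^ j) = m / Nat.gcd m j := orderOf_pow z
  set gi := Nat.gcd m i with hgi
  set gj := Nat.gcd m j with hgj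
  have hgidvd : gi ∣ m := Nat.gcd_dvd_left m i
  have hgjdvd : gj ∣ m := Nat.gcd_dvd_left m j
  have hgipos : 0 < gi := Nat.gcd_pos_of_pos_left i hmpos
  have hgjpos : 0 < gj := Nat.gcd_pos_of_pos_left j hmpos
  -- from h : m/gi ∣ m/gj deduce gj ∣ gi
  have hdvd : m / gi ∣ m / gj := by rw [← hoi, ← hoj]; exact h
  obtain ⟨t, ht⟩ := hdvd
  have hgj_dvd_gi : gj ∣ gi := by
    have h1 : gi * (m / gi) = m := Nat.mul_div_cancel' hgidvd
    have h2 : gj * (m / gj) = m := Nat.mul_div_cancel' hgjdvd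
    have hpos : 0 < m / gi := Nat.div_pos (Nat.le_of_dvd hmpos hgidvd) hgipos
    have : gj * t * (m / gi) = gi * (m / gi) := by
      rw [h1]; rw [ht] at h2; ring_nf at h2 ⊢; linarith [h2]
    exact ⟨t, (Nat.eq_of_mul_eq_mul_right hpos this).symm⟩
  -- z ^ gj ∈ zpowers (z ^ j)
  have hbez : (gj : ℤ) = m * Nat.gcdA m j + j * Nat.gcdB m j := Nat.gcd_eq_gcd_ab m j
  have hzm : (z : K) ^ (m : ℤ) = 1 := by
    rw [zpow_natCast]; exact pow_orderOf_eq_one z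
  have hkey : z ^ (gj : ℤ) ∈ zpowers (z ^ j) := by
    rw [hbez, zpow_add, zpow_mul, zpow_mul, hzm, one_zpow, one_mul]
    rw [zpow_natCast (z) j]
    exact zpow_mem (mem_zpowers _) _
  have hgj_dvd_i : gj ∣ i := hgj_dvd_gi.trans (Nat.gcd_dvd_right m i)
  obtain ⟨s, rfl⟩ := hgj_dvd_i
  have : z ^ (gj * s) = (z ^ (gj : ℤ)) ^ (s : ℤ) := by
    rw [← zpow_natCast z (gj * s), Nat.cast_mul, zpow_mul]
  show z ^ (gj * s) ∈ zpowers (z ^ j)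
  rw [this]
  exact zpow_mem hkey _

lemma orderOf_dvd_of_mem {u v : K} (h : u ∈ zpowers v) : orderOf u ∣ orderOf v :=
  orderOf_dvd_of_mem_zpowers h

/-- Equal subgroups from membership plus order equality. -/
lemma zpowers_eq_of_mem_of_orderOf_eq {u w : K} (h : u ∈ zpowers w)
    (ho : orderOf u = orderOf w) : zpowers u = zpowers w := by
  have hle : (zpowers u : Set K) ⊆ (zpowers w : Set K) := zpowers_le.mpr h
  have hcard : (zpowers w : Set K).ncard ≤ (zpowers u : Set K).ncard := by
    have h1 : (zpowers u : Set K).ncard = orderOf u := by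
      rw [← Nat.card_zpowers u]; exact Nat.card_coe_set_eq _ |>.symm
    have h2 : (zpowers w : Set K).ncard = orderOf w := by
      rw [← Nat.card_zpowers w]; exact Nat.card_coe_set_eq _ |>.symm
    omega
  have := Set.eq_of_subset_of_ncard_le hle hcard (Set.toFinite _)
  exact SetLike.coe_injective this

/-- order of `z ^ (m / d)` is `d` when `d ∣ m = orderOf z`. -/
lemma orderOf_pow_div {z : K} {d : ℕ} (hd : d ∣ orderOf z) (hd0 : 0 < d) :
    orderOf (z ^ (orderOf z / d)) = d := by
  have hm : 0 < orderOf z := orderOf_pos z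
  rw [orderOf_pow z]
  have h1 : orderOf z / d ∣ orderOf z := Nat.div_dvd_of_dvd hd
  rw [Nat.gcd_eq_right h1]
  exact Nat.div_div_self hd hm.ne'


instance zpowersCyclic (z : K) : IsCyclic ↥(zpowers z) := by
  refine ⟨⟨⟨z, mem_zpowers z⟩, ?_⟩⟩
  rintro ⟨w, hw⟩
  obtain ⟨k, hk⟩ := Subgroup.mem_zpowers_iff.mp hw
  refine Subgroup.mem_zpowers_iff.mpr ⟨k, ?_⟩
  ext
  rw [SubgroupClass.coe_zpow]
  exact hk

lemma ncard_gens (z : K) :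
    {w : K | zpowers w = zpowers z}.ncard = (orderOf z).totient := by
  classical
  have hset : {w : K | zpowers w = zpowers z}
      = (fun t : ↥(zpowers z) => (t : K)) '' {t : ↥(zpowers z) | orderOf t = orderOf z} := by
    ext w
    simp only [Set.mem_setOf_eq, Set.mem_image]
    constructor
    · intro h
      have hw : w ∈ zpowers z := h ▸ mem_zpowers w
      refine ⟨⟨w, hw⟩, ?_, rfl⟩
      have h1 : orderOf (⟨w, hw⟩ : ↥(zpowers z)) = orderOf w :=
        (Subgroup.orderOf_coe (⟨w, hw⟩ : ↥(zpowers z))).symm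
      rw [h1]
      have : Nat.card ↥(zpowers w) = Nat.card ↥(zpowers z) := by rw [h]
      rwa [Nat.card_zpowers, Nat.card_zpowers] at this
    · rintro ⟨t, ht, rfl⟩
      have h1 : orderOf ((t : K)) = orderOf t := Subgroup.orderOf_coe _
      exact zpowers_eq_of_mem_of_orderOf_eq (t.2) (by rw [h1, ht])
  rw [hset, Set.ncard_image_of_injective _ Subtype.coe_injective]
  have hd : orderOf z ∣ Fintype.card ↥(zpowers z) := by
    rw [Fintype.card_zpowers]
  have := IsCyclic.card_orderOf_eq_totient (α := ↥(zpowers z)) hd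
  rw [← this, Set.ncard_eq_toFinset_card', Set.toFinset_setOf]

lemma totient_eq_imp {a m : ℕ} (hm : 0 < m) (ha : a ∣ m) (hne : a ≠ m)
    (h : Nat.totient m = Nat.totient a) : m = 2 * a := by
  have hapos : 0 < a := Nat.pos_of_dvd_of_pos ha hm
  have hmt : m = a * (m / a) := (Nat.mul_div_cancel' ha).symm
  set t := m / a with htdef
  have ht1 : t ≠ 1 := fun h1 => hne (by rw [hmt, h1, mul_one])
  have htpos : 0 < t := Nat.div_pos (Nat.le_of_dvd hm ha) hapos
  by_cases hcop : Nat.Coprime a t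
  · have hmul : Nat.totient (a * t) = Nat.totient a * Nat.totient t := Nat.totient_mul hcop
    rw [← hmt] at hmul
    have hφa : 0 < Nat.totient a := Nat.totient_pos.mpr hapos
    have hφt : Nat.totient t = 1 := by
      have : Nat.totient a * Nat.totient t = Nat.totient a * 1 := by
        rw [mul_one, ← hmul, h]
      exact Nat.eq_of_mul_eq_mul_left hφa this
    have := Nat.totient_eq_one_iff.mp hφt
    rcases this with h2 | h2
    · exact absurd h2 ht1
    · rw [hmt, h2]; ring
  · have hg : Nat.gcd a t ≠ 1 := hcop
    set p := (Nat.gcd a t).minFac with hpdef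
    have hp : p.Prime := Nat.minFac_prime hg
    have hpa : p ∣ a := (Nat.minFac_dvd _).trans (Nat.gcd_dvd_left a t)
    have hpt : p ∣ t := (Nat.minFac_dvd _).trans (Nat.gcd_dvd_right a t)
    have hpam : p * a ∣ m := by
      obtain ⟨t', ht'⟩ := hpt
      refine ⟨t', ?_⟩
      rw [hmt, ht']; ring
    have h1 : Nat.totient (p * a) = p * Nat.totient a := Nat.totient_mul_of_prime_of_dvd hp hpa
    have h2 : Nat.totient (p * a) ≤ Nat.totient m :=
      Nat.le_of_dvd (Nat.totient_pos.mpr hm) (Nat.totient_dvd_of_dvd hpam)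
    have hφa : 0 < Nat.totient a := Nat.totient_pos.mpr hapos
    have hp2 : 2 ≤ p := hp.two_le
    nlinarith [h, h1, h2]


def twin (u v : K) : Prop := ∀ w, cmp w u ↔ cmp w v

lemma twin.symm {u v : K} (h : twin u v) : twin v u := fun w => (h w).symm

lemma twin_refl (u : K) : twin u u := fun _ => Iff.rfl

lemma cmp_of_twin_left {u v : K} (h : twin u v) : cmp u v := by
  exact (h u).mp (cmp_self u)

lemma twin_of_zpowers_eq {u v : K} (h : zpowers u = zpowers v) : twin u v := by
  intro w
  constructor
  · rintro (hw | hw)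
    · exact Or.inl (h ▸ hw)
    · exact Or.inr (zpowers_le.mp (h ▸ zpowers_le.mpr hw))
  · rintro (hw | hw)
    · exact Or.inl (h.symm ▸ hw)
    · exact Or.inr (zpowers_le.mp (h.symm ▸ zpowers_le.mpr hw))

lemma T0aux {u v : K} (htw : twin u v) (hne : zpowers u ≠ zpowers v)
    (hu1 : u ≠ 1) (hmem : u ∈ zpowers v) :
    ∃ p : ℕ, p.Prime ∧ (∃ i, 1 ≤ i ∧ orderOf u = p ^ i) ∧ ∃ j, 1 ≤ j ∧ orderOf v = p ^ j := by
  classical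
  set mu := orderOf u with hmu
  set mv := orderOf v with hmv
  have hdvd : mu ∣ mv := orderOf_dvd_of_mem hmem
  have hmune : mu ≠ mv := fun h => hne (zpowers_eq_of_mem_of_orderOf_eq hmem h)
  have hmu2 : 2 ≤ mu := by
    have h1 : mu ≠ 1 := fun h => hu1 (orderOf_eq_one_iff.mp h)
    have h0 : 0 < mu := orderOf_pos u
    omega
  have hmv0 : mv ≠ 0 := (orderOf_pos v).ne'
  have hmu0 : mu ≠ 0 := by omega
  have hdich : ∀ r : ℕ, r.Prime → r ∣ mv →
      (r ^ mv.factorization r ∣ mu ∨ mu ∣ r ^ mv.factorization r) := by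
    intro r hr hrdvd
    have hrediv : r ^ mv.factorization r ∣ mv := Nat.ordProj_dvd mv r
    have herpos : 0 < r ^ mv.factorization r := pow_pos hr.pos _
    set w := v ^ (mv / r ^ mv.factorization r) with hwdef
    have hwo : orderOf w = r ^ mv.factorization r := orderOf_pow_div hrediv herpos
    have hwmem : w ∈ zpowers v := (zpowers v).pow_mem (mem_zpowers v) _
    have hcw : cmp w u := (htw w).mpr (cmp_of_mem hwmem)
    rcases hcw with hc | hc
    · exact Or.inl (hwo ▸ orderOf_dvd_of_mem hc)
    · exact Or.inr (hwo ▸ orderOf_dvd_of_mem hc)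
  by_cases hstep : ∀ r : ℕ, r.Prime → r ∣ mv → r ^ mv.factorization r ∣ mu
  · exfalso
    have hvd : mv ∣ mu := by
      rw [← Nat.factorization_le_iff_dvd hmv0 hmu0]
      intro p
      by_cases hp : p.Prime
      · by_cases hpd : p ∣ mv
        · exact (Nat.Prime.pow_dvd_iff_le_factorization hp hmu0).mp (hstep p hp hpd)
        · rw [Nat.factorization_eq_zero_of_not_dvd hpd]; exact Nat.zero_le _
      · rw [Nat.factorization_eq_zero_of_not_prime _ hp]; exact Nat.zero_le _
    exact hmune (Nat.dvd_antisymm hdvd hvd)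
  · push_neg at hstep
    obtain ⟨t0, ht0p, ht0d, ht0nd⟩ := hstep
    have hmut0 : mu ∣ t0 ^ mv.factorization t0 := (hdich t0 ht0p ht0d).resolve_left ht0nd
    obtain ⟨i, hile, hmu_eq⟩ := (Nat.dvd_prime_pow ht0p).mp hmut0
    have hi1 : 1 ≤ i := by
      rcases Nat.eq_zero_or_pos i with h0 | h
      · exfalso; rw [h0, pow_zero] at hmu_eq; omega
      · exact h
    have hqall : ∀ {q : ℕ}, q.Prime → q ∣ mv → q = t0 := by
      intro q hqp hqd
      by_contra hqne
      rcases hdich q hqp hqd with hc | hc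
      · have heq1 : 1 ≤ mv.factorization q := by
          have : q ∈ mv.primeFactors := Nat.mem_primeFactors.mpr ⟨hqp, hqd, hmv0⟩
          have h2 := Nat.support_factorization (n := mv) ▸ this
          have := Finsupp.mem_support_iff.mp h2
          omega
        have hq1 : q ∣ mu := dvd_trans (dvd_pow_self q (Nat.one_le_iff_ne_zero.mp heq1)) hc
        have hq2 : q ∣ t0 ^ i := hmu_eq ▸ hq1
        exact hqne ((Nat.prime_dvd_prime_iff_eq hqp ht0p).mp (hqp.dvd_of_dvd_pow hq2))
      · have ht01 : t0 ∣ mu := by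
          rw [hmu_eq]; exact dvd_pow_self t0 (Nat.one_le_iff_ne_zero.mp hi1)
        have := ht01.trans hc
        exact hqne ((Nat.prime_dvd_prime_iff_eq ht0p hqp).mp (ht0p.dvd_of_dvd_pow this)).symm
    have hmveq : mv = t0 ^ mv.primeFactorsList.length :=
      Nat.eq_prime_pow_of_unique_prime_dvd hmv0 hqall
    have hj1 : 1 ≤ mv.primeFactorsList.length := by
      rcases Nat.eq_zero_or_pos mv.primeFactorsList.length with h0 | h
      · exfalso; rw [h0, pow_zero] at hmveq
        have hle := Nat.le_of_dvd (by omega) hdvd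
        omega
      · exact h
    exact ⟨t0, ht0p, ⟨i, hi1, hmu_eq⟩, ⟨_, hj1, hmveq⟩⟩

lemma T0 {u v : K} (htw : twin u v) (hne : zpowers u ≠ zpowers v)
    (hu1 : u ≠ 1) (hv1 : v ≠ 1) :
    ∃ p : ℕ, p.Prime ∧ (∃ i, 1 ≤ i ∧ orderOf u = p ^ i) ∧ ∃ j, 1 ≤ j ∧ orderOf v = p ^ j := by
  rcases cmp_of_twin_left htw with hc | hc
  · exact T0aux htw hne hu1 hc
  · obtain ⟨p, hp, h1, h2⟩ := T0aux htw.symm (Ne.symm hne) hv1 hc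
    exact ⟨p, hp, h2, h1⟩

lemma no_twin_pp {z u1 u2 : K} (h1 : u1 ∈ zpowers z) (htw : twin u1 u2)
    {p q i j : ℕ} (hp : p.Prime) (hq : q.Prime) (hqp : q ≠ p)
    (ho1 : orderOf u1 = p ^ i) (ho2 : orderOf u2 = p ^ j) (hij : i < j)
    (hqm : q ∣ orderOf z) : False := by
  set m := orderOf z with hm
  have hpi : p ^ i ∣ m := ho1 ▸ orderOf_dvd_of_mem h1
  have hcop : Nat.Coprime (p ^ i) q :=
    (Nat.coprime_primes hp hq).mpr (fun h => hqp h.symm) |>.pow_left i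
  have hdvd : p ^ i * q ∣ m := hcop.mul_dvd_of_dvd_of_dvd hpi hqm
  have hpos : 0 < p ^ i * q := Nat.mul_pos (pow_pos hp.pos i) hq.pos
  set w := z ^ (m / (p ^ i * q)) with hwdef
  have hwo : orderOf w = p ^ i * q := orderOf_pow_div hdvd hpos
  have hwz : w ∈ zpowers z := (zpowers z).pow_mem (mem_zpowers z) _
  have hu1w : u1 ∈ zpowers w :=
    mem_zpowers_of_orderOf_dvd h1 hwz (by rw [ho1, hwo]; exact dvd_mul_right _ _)
  have hcw : cmp w u2 := (htw w).mp (Or.inr hu1w)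
  rcases hcw with hc | hc
  · have hd : p ^ i * q ∣ p ^ j := by rw [← hwo, ← ho2]; exact orderOf_dvd_of_mem hc
    have hqd : q ∣ p ^ j := (dvd_mul_left q (p ^ i)).trans hd
    exact hqp ((Nat.prime_dvd_prime_iff_eq hq hp).mp (hq.dvd_of_dvd_pow hqd))
  · have hdj : p ^ j ∣ p ^ i * q := by rw [← hwo, ← ho2]; exact orderOf_dvd_of_mem hc
    have hstep : p ^ i * p ∣ p ^ i * q := by
      rw [← pow_succ]; exact (pow_dvd_pow p (by omega)).trans hdj
    have hpq : p ∣ q := (Nat.mul_dvd_mul_iff_left (pow_pos hp.pos i)).mp hstep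
    exact hqp ((Nat.prime_dvd_prime_iff_eq hp hq).mp hpq).symm

lemma exists_two_primes {a b m : ℕ} (ha : a ∣ m) (hb : b ∣ m) (hab : ¬ a ∣ b) (hba : ¬ b ∣ a) :
    ∃ p q : ℕ, p.Prime ∧ q.Prime ∧ p ≠ q ∧ p ∣ a ∧ q ∣ b := by
  have ha0 : a ≠ 0 := by rintro rfl; exact hba (dvd_zero b)
  have hb0 : b ≠ 0 := by rintro rfl; exact hab (dvd_zero a)
  have h1 : ¬ a.factorization ≤ b.factorization :=
    fun h => hab ((Nat.factorization_le_iff_dvd ha0 hb0).mp h)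
  have h2 : ¬ b.factorization ≤ a.factorization :=
    fun h => hba ((Nat.factorization_le_iff_dvd hb0 ha0).mp h)
  rw [Finsupp.le_def] at h1 h2
  push_neg at h1 h2
  obtain ⟨p, hp⟩ := h1
  obtain ⟨q, hq⟩ := h2
  have hpprime : p.Prime := by
    have : p ∈ a.factorization.support := Finsupp.mem_support_iff.mpr (by omega)
    rw [Nat.support_factorization] at this
    exact Nat.prime_of_mem_primeFactors this
  have hqprime : q.Prime := by
    have : q ∈ b.factorization.support := Finsupp.mem_support_iff.mpr (by omega)
    rw [Nat.support_factorization] at this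
    exact Nat.prime_of_mem_primeFactors this
  have hpa : p ∣ a := by
    have : p ∈ a.primeFactors := by
      rw [← Nat.support_factorization]; exact Finsupp.mem_support_iff.mpr (by omega)
    exact Nat.dvd_of_mem_primeFactors this
  have hqb : q ∣ b := by
    have : q ∈ b.primeFactors := by
      rw [← Nat.support_factorization]; exact Finsupp.mem_support_iff.mpr (by omega)
    exact Nat.dvd_of_mem_primeFactors this
  refine ⟨p, q, hpprime, hqprime, ?_, hpa, hqb⟩
  rintro rfl
  omega


lemma mem_zpowers_of_star {s : K} (hstar : ∀ w, cmp s w)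
    {p q : ℕ} (hp : p.Prime) (hq : q.Prime) (hpq : p ≠ q)
    (hpd : p ∣ orderOf s) (hqd : q ∣ orderOf s) (h : K) : h ∈ zpowers s := by
  classical
  suffices H : ∀ n : ℕ, ∀ h : K, orderOf h = n → h ∈ zpowers s from H _ h rfl
  intro n
  induction n using Nat.strong_induction_on with
  | _ n ih =>
    intro h hn
    by_cases h1 : h = 1
    · rw [h1]; exact one_mem _
    have hn2 : 2 ≤ n := by
      have hpos := orderOf_pos h
      have hne1 : orderOf h ≠ 1 := fun hh => h1 (orderOf_eq_one_iff.mp hh)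
      omega
    set r := n.minFac with hr
    have hrp : r.Prime := Nat.minFac_prime (by omega)
    set pk := r ^ n.factorization r with hpk
    have hpkdvd : pk ∣ n := Nat.ordProj_dvd n r
    set t := n / pk with ht
    have htpk : pk * t = n := Nat.mul_div_cancel' hpkdvd
    have hfr1 : 1 ≤ n.factorization r := by
      have hmem : r ∈ n.primeFactors := Nat.mem_primeFactors.mpr ⟨hrp, n.minFac_dvd, by omega⟩
      rw [← Nat.support_factorization] at hmem
      have := Finsupp.mem_support_iff.mp hmem
      omega
    have hpk2 : 2 ≤ pk := by
      calc 2 ≤ r := hrp.two_le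
      _ = r ^ 1 := (pow_one r).symm
      _ ≤ r ^ n.factorization r := Nat.pow_le_pow_right hrp.pos hfr1
    by_cases htriv : t = 1
    · have hnpk : n = pk := by rw [← htpk, htriv, mul_one]
      rcases hstar h with hc | hc
      · exfalso
        have hsd : orderOf s ∣ pk := by
          rw [← hnpk, ← hn]; exact orderOf_dvd_of_mem hc
        have hp' : p = r := (Nat.prime_dvd_prime_iff_eq hp hrp).mp
          (hp.dvd_of_dvd_pow (hpd.trans hsd))
        have hq' : q = r := (Nat.prime_dvd_prime_iff_eq hq hrp).mp
          (hq.dvd_of_dvd_pow (hqd.trans hsd))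
        exact hpq (hp'.trans hq'.symm)
      · exact hc
    · have htpos : 0 < t := Nat.div_pos (Nat.le_of_dvd (by omega) hpkdvd) (by omega)
      have ht2 : 2 ≤ t := by omega
      have hcop : Nat.Coprime pk t := (Nat.coprime_ordCompl hrp (by omega)).pow_left _
      have ho1 : orderOf (h ^ pk) = t := by
        rw [orderOf_pow h, hn, Nat.gcd_eq_right hpkdvd]
      have ho2 : orderOf (h ^ t) = pk := by
        rw [orderOf_pow h, hn, Nat.gcd_eq_right (Nat.div_dvd_of_dvd hpkdvd)]
        exact Nat.div_div_self hpkdvd (by omega)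
      have htlt : t < n := by
        rw [← htpk]
        exact (Nat.lt_mul_iff_one_lt_left htpos).mpr (by omega)
      have hpklt : pk < n := by
        rw [← htpk]
        exact (Nat.lt_mul_iff_one_lt_right (by omega)).mpr (by omega)
      have hm1 : h ^ pk ∈ zpowers s := ih t htlt _ ho1
      have hm2 : h ^ t ∈ zpowers s := ih pk hpklt _ ho2
      have hbez : (1 : ℤ) = pk * Nat.gcdA pk t + t * Nat.gcdB pk t := by
        have hb := Nat.gcd_eq_gcd_ab pk t
        rwa [Nat.Coprime.gcd_eq_one hcop, Nat.cast_one] at hb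
      have hsplit : h = (h ^ pk) ^ Nat.gcdA pk t * (h ^ t) ^ Nat.gcdB pk t := by
        have h2 : h = h ^ (1 : ℤ) := (zpow_one h).symm
        calc h = h ^ (1 : ℤ) := h2
        _ = h ^ ((pk : ℤ) * Nat.gcdA pk t + (t : ℤ) * Nat.gcdB pk t) := by rw [← hbez]
        _ = (h ^ (pk : ℤ)) ^ Nat.gcdA pk t * (h ^ (t : ℤ)) ^ Nat.gcdB pk t := by
            rw [zpow_add, zpow_mul, zpow_mul]
        _ = (h ^ pk) ^ Nat.gcdA pk t * (h ^ t) ^ Nat.gcdB pk t := by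
            rw [zpow_natCast, zpow_natCast]
      rw [hsplit]
      exact mul_mem (zpow_mem hm1 _) (zpow_mem hm2 _)


lemma twin_rigid {z x y v : K} (hx : x ∈ zpowers z) (hy : y ∈ zpowers z)
    (hcxy : ¬ cmp x y) (htv : twin v x) : zpowers v = zpowers x := by
  by_contra hne2
  have hv1 : v ≠ 1 := by
    rintro rfl
    exact hcxy (((htv y).mp (cmp_one_right y)).symm)
  have hx1 : x ≠ 1 := by rintro rfl; exact hcxy (cmp_one_left y)
  have hnab : ¬ orderOf x ∣ orderOf y :=
    fun h => hcxy (Or.inl (mem_zpowers_of_orderOf_dvd hx hy h))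
  have hnba : ¬ orderOf y ∣ orderOf x :=
    fun h => hcxy (Or.inr (mem_zpowers_of_orderOf_dvd hy hx h))
  have hadvd := orderOf_dvd_of_mem hx
  have hbdvd := orderOf_dvd_of_mem hy
  obtain ⟨p₀, q₀, hp₀, hq₀, hp₀q₀, hp₀a, hq₀b⟩ := exists_two_primes hadvd hbdvd hnab hnba
  obtain ⟨p, hp, ⟨i, hi1, hoi⟩, ⟨j, hj1, hoj⟩⟩ := T0 htv hne2 hv1 hx1
  have hp₀p : p₀ = p := (Nat.prime_dvd_prime_iff_eq hp₀ hp).mp (hp₀.dvd_of_dvd_pow (hoj ▸ hp₀a))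
  have hq₀p : q₀ ≠ p := fun hh => hp₀q₀ (hp₀p.trans hh.symm)
  have hq₀m : q₀ ∣ orderOf z := hq₀b.trans hbdvd
  rcases lt_trichotomy i j with hij | hij | hij
  · have hvz : v ∈ zpowers z := by
      rcases cmp_of_twin_left htv with hc | hc
      · exact (zpowers_le.mpr hx) hc
      · exfalso
        have hdd : p ^ j ∣ p ^ i := by rw [← hoi, ← hoj]; exact orderOf_dvd_of_mem hc
        have := (Nat.pow_le_pow_iff_right hp.one_lt).mp (Nat.le_of_dvd (pow_pos hp.pos i) hdd)
        omega
    exact no_twin_pp hvz htv hp hq₀ hq₀p hoi hoj hij hq₀m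
  · apply hne2
    have ho : orderOf v = orderOf x := by rw [hoi, hoj, hij]
    rcases cmp_of_twin_left htv with hc | hc
    · exact zpowers_eq_of_mem_of_orderOf_eq hc ho
    · exact (zpowers_eq_of_mem_of_orderOf_eq hc ho.symm).symm
  · exact no_twin_pp hx htv.symm hp hq₀ hq₀p hoj hoi hij hq₀m

section Graph

variable {G H : Type*} [Group G] [Fintype G] [Group H] [Fintype H]

lemma cmp_map (e : powerGraph G ≃g powerGraph H) {u v : G} :
    cmp (e u) (e v) ↔ cmp u v := by
  by_cases h : u = v
  · subst h
    exact iff_of_true (cmp_self _) (cmp_self _)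
  · have h' : e u ≠ e v := fun hh => h (e.injective hh)
    constructor
    · intro hc
      exact (e.map_rel_iff.mp (show (powerGraph H).Adj (e u) (e v) from ⟨h', hc⟩)).2
    · intro hc
      exact (e.map_rel_iff.mpr (show (powerGraph G).Adj u v from ⟨h, hc⟩)).2

lemma twin_map (e : powerGraph G ≃g powerGraph H) {u v : G} :
    twin (e u) (e v) ↔ twin u v := by
  constructor
  · intro h w
    have h2 := h (e w)
    rw [cmp_map e, cmp_map e] at h2
    exact h2
  · intro h w'
    rw [← e.apply_symm_apply w', cmp_map e, cmp_map e]
    exact h (e.symm w')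

lemma star_map (e : powerGraph G ≃g powerGraph H) {s : G} (h : ∀ w, cmp s w) :
    ∀ w', cmp (e s) w' := by
  intro w'
  rw [← e.apply_symm_apply w', cmp_map e]
  exact h _

lemma twinset_image (e : powerGraph G ≃g powerGraph H) (u : G) :
    (⇑e) '' {v : G | twin v u} = {v' : H | twin v' (e u)} := by
  ext v'
  simp only [Set.mem_image, Set.mem_setOf_eq]
  constructor
  · rintro ⟨v, hv, rfl⟩
    exact (twin_map e).mpr hv
  · intro h
    exact ⟨e.symm v', (twin_map e).mp (by rw [e.apply_symm_apply]; exact h),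
      e.apply_symm_apply v'⟩


lemma main_forward (e : powerGraph G ≃g powerGraph H) {x y : G}
    (hne : x ≠ y) (hz : ∃ z : G, x ∈ zpowers z ∧ y ∈ zpowers z) :
    ∃ z' : H, e x ∈ zpowers z' ∧ e y ∈ zpowers z' := by
  classical
  obtain ⟨z, hx, hy⟩ := hz
  by_cases hcxy : cmp x y
  · have hadj : (powerGraph H).Adj (e x) (e y) :=
      e.map_rel_iff.mpr (show (powerGraph G).Adj x y from ⟨hne, hcxy⟩)
    rcases hadj.2 with hc | hc
    · exact ⟨e y, hc, mem_zpowers _⟩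
    · exact ⟨e x, mem_zpowers _, hc⟩
  by_contra hU'
  push_neg at hU'
  have hncxy' : ¬ cmp (e x) (e y) := fun hc => hcxy ((cmp_map e).mp hc)
  set m := orderOf z with hm
  have hadvd : orderOf x ∣ m := orderOf_dvd_of_mem hx
  have hbdvd : orderOf y ∣ m := orderOf_dvd_of_mem hy
  have hnab : ¬ orderOf x ∣ orderOf y :=
    fun h => hcxy (Or.inl (mem_zpowers_of_orderOf_dvd hx hy h))
  have hnba : ¬ orderOf y ∣ orderOf x :=
    fun h => hcxy (Or.inr (mem_zpowers_of_orderOf_dvd hy hx h))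
  obtain ⟨p₀, q₀, hp₀, hq₀, hp₀q₀, hp₀a, hq₀b⟩ :=
    exists_two_primes hadvd hbdvd hnab hnba
  have hp₀m : p₀ ∣ m := hp₀a.trans hadvd
  have hq₀m : q₀ ∣ m := hq₀b.trans hbdvd
  by_cases hS : ∀ s : G, (∀ w, cmp s w) → s = 1
  case neg =>
    push_neg at hS
    obtain ⟨s, hstar, hs1⟩ := hS
    obtain ⟨s', hstar', hs1'⟩ : ∃ s' : H, (∀ w', cmp s' w') ∧ s' ≠ (1 : H) := by
      by_cases hes : e s = 1
      · refine ⟨e 1, star_map e (fun w => cmp_one_left w), ?_⟩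
        rw [← hes]
        exact fun hh => hs1 (e.injective hh).symm
      · exact ⟨e s, star_map e hstar, hes⟩
    by_cases hmp : ∃ p q : ℕ, p.Prime ∧ q.Prime ∧ p ≠ q ∧ p ∣ orderOf s' ∧ q ∣ orderOf s'
    · obtain ⟨p, q, hp, hq, hpq, hpd, hqd⟩ := hmp
      exact hU' s' (mem_zpowers_of_star hstar' hp hq hpq hpd hqd (e x))
        (mem_zpowers_of_star hstar' hp hq hpq hpd hqd (e y))
    · push_neg at hmp
      set n' := orderOf s' with hn'
      have hn'2 : 2 ≤ n' := by
        have h1 := orderOf_pos s'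
        have h2 : n' ≠ 1 := fun hh => hs1' (orderOf_eq_one_iff.mp hh)
        omega
      set pp := n'.minFac with hpp
      have hppp : pp.Prime := Nat.minFac_prime (by omega)
      have huniq : ∀ q : ℕ, q.Prime → q ∣ n' → q = pp := by
        intro q hqp hqd
        by_contra hne2
        exact hmp pp q hppp hqp (fun hh => hne2 hh.symm) n'.minFac_dvd hqd
      have hcard : ∀ q : ℕ, q.Prime → q ∣ Fintype.card H → q = pp := by
        intro q hqp hqd
        haveI : Fact q.Prime := ⟨hqp⟩
        obtain ⟨g, hg⟩ := exists_prime_orderOf_dvd_card q hqd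
        rcases hstar' g with hc | hc
        · have h1 : n' ∣ q := hg ▸ orderOf_dvd_of_mem hc
          rcases (Nat.Prime.eq_one_or_self_of_dvd hqp n' h1) with h2 | h2
          · omega
          · exact huniq q hqp (h2 ▸ dvd_rfl)
        · exact huniq q hqp (hg ▸ orderOf_dvd_of_mem hc)
      have hmG : m ∣ Fintype.card G := orderOf_dvd_card
      have hGH : Fintype.card G = Fintype.card H := Fintype.card_congr e.toEquiv
      have h1 := hcard p₀ hp₀ (by rw [← hGH]; exact hp₀m.trans hmG)
      have h2 := hcard q₀ hq₀ (by rw [← hGH]; exact hq₀m.trans hmG)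
      exact hp₀q₀ (h1.trans h2.symm)
  case pos =>
    have he1 : e (1 : G) = (1 : H) := by
      have h5 : e.symm (1 : H) = 1 := by
        apply hS
        intro w
        have h6 := (cmp_map e.symm (u := (1 : H)) (v := e w)).mpr (cmp_one_left _)
        rwa [e.symm_apply_apply] at h6
      rw [← h5, e.apply_symm_apply]
    have hSH : ∀ s' : H, (∀ w', cmp s' w') → s' = 1 := by
      intro s' hstar'
      have hstar2 : ∀ w : G, cmp (e.symm s') w := by
        intro w
        have h2 := (cmp_map e.symm (u := s') (v := e w)).mpr (hstar' (e w))
        rwa [e.symm_apply_apply] at h2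
      have h3 : e.symm s' = 1 := hS _ hstar2
      have h4 : s' = e 1 := by rw [← h3, e.apply_symm_apply]
      rw [h4, he1]
    set K' : Subgroup H := zpowers (e x) ⊓ zpowers (e y) with hK'
    have dich : ∀ w' : H, cmp w' (e x) → cmp w' (e y) → w' ∈ K' := by
      intro w' h1 h2
      rcases h1 with h1 | h1
      · rcases h2 with h2 | h2
        · exact ⟨h1, h2⟩
        · exact absurd (Or.inr ((zpowers_le.mpr h1) h2)) hncxy'
      · rcases h2 with h2 | h2
        · exact absurd (Or.inl ((zpowers_le.mpr h2) h1)) hncxy'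
        · exact absurd h2 (hU' w' h1)
    have hx'1 : e x ≠ 1 := fun hh => hncxy' (hh ▸ cmp_one_left (e y))
    have hz1 : z ≠ 1 := by
      rintro rfl
      rw [zpowers_one_eq_bot] at hx
      exact hcxy ((Subgroup.mem_bot.mp hx) ▸ cmp_one_left y)
    have hcz'x' : cmp (e z) (e x) := (cmp_map e).mpr (Or.inr hx)
    have hcz'y' : cmp (e z) (e y) := (cmp_map e).mpr (Or.inr hy)
    have hz0K : e z ∈ K' := dich _ hcz'x' hcz'y'
    have hz0'1 : e z ≠ 1 := fun hh => hz1 (e.injective (hh.trans he1.symm))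
    -- twin rigidity on G side
    have htwx : ∀ v : G, twin v x → zpowers v = zpowers x :=
      fun v htv => twin_rigid hx hy hcxy htv
    have htwy : ∀ v : G, twin v y → zpowers v = zpowers y :=
      fun v htv => twin_rigid hy hx (fun hc => hcxy hc.symm) htv
    have htwz : ∀ v : G, twin v z → zpowers v = zpowers z := by
      intro v htv
      by_contra hne2
      have hv1 : v ≠ 1 := by
        rintro rfl
        have hzstar : ∀ w, cmp z w := fun w => ((htv w).mp (cmp_one_right w)).symm
        exact hz1 (hS z hzstar)
      obtain ⟨p, hp, _, ⟨j, hj1, hoj⟩⟩ := T0 htv hne2 hv1 hz1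
      have hojm : m = p ^ j := by rw [hm]; exact hoj
      have h1 : p₀ = p := (Nat.prime_dvd_prime_iff_eq hp₀ hp).mp
        (hp₀.dvd_of_dvd_pow (hojm ▸ hp₀m))
      have h2 : q₀ = p := (Nat.prime_dvd_prime_iff_eq hq₀ hp).mp
        (hq₀.dvd_of_dvd_pow (hojm ▸ hq₀m))
      exact hp₀q₀ (h1.trans h2.symm)
    -- totient comparisons
    have hcardx : {v' : H | twin v' (e x)}.ncard = (orderOf x).totient := by
      rw [← twinset_image e x, Set.ncard_image_of_injective _ e.injective]
      have hseteq : {v : G | twin v x} = {v : G | zpowers v = zpowers x} := by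
        ext v
        exact ⟨htwx v, fun h => twin_of_zpowers_eq h⟩
      rw [hseteq, ncard_gens]
    have hcardy : {v' : H | twin v' (e y)}.ncard = (orderOf y).totient := by
      rw [← twinset_image e y, Set.ncard_image_of_injective _ e.injective]
      have hseteq : {v : G | twin v y} = {v : G | zpowers v = zpowers y} := by
        ext v
        exact ⟨htwy v, fun h => twin_of_zpowers_eq h⟩
      rw [hseteq, ncard_gens]
    have hφa' : (orderOf (e x)).totient ≤ (orderOf x).totient := by
      rw [← ncard_gens (e x), ← hcardx]
      exact Set.ncard_le_ncard (fun v' hv' => twin_of_zpowers_eq hv') (Set.toFinite _)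
    have hφb' : (orderOf (e y)).totient ≤ (orderOf y).totient := by
      rw [← ncard_gens (e y), ← hcardy]
      exact Set.ncard_le_ncard (fun v' hv' => twin_of_zpowers_eq hv') (Set.toFinite _)
    set d' := Nat.card K' with hd'
    have hKcard : (K' : Set H).ncard = d' := by
      rw [hd', ← Nat.card_coe_set_eq]
      rfl
    have hTsub : (⇑e) '' ({v : G | zpowers v = zpowers z} ∪ {1}) ⊆ (K' : Set H) := by
      rintro v' ⟨v, hv, rfl⟩
      rcases hv with hv | hv
      · have hvx : cmp v x := Or.inr (by rw [hv]; exact hx)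
        have hvy : cmp v y := Or.inr (by rw [hv]; exact hy)
        exact dich _ ((cmp_map e).mpr hvx) ((cmp_map e).mpr hvy)
      · have hv1 : v = 1 := hv
        subst hv1
        exact dich _ ((cmp_map e).mpr (cmp_one_left x)) ((cmp_map e).mpr (cmp_one_left y))
    have hone : (1 : G) ∉ {v : G | zpowers v = zpowers z} := by
      intro hh
      have h2 : z ∈ zpowers (1 : G) := by
        rw [show zpowers (1 : G) = zpowers z from hh]
        exact mem_zpowers z
      rw [zpowers_one_eq_bot] at h2
      exact hz1 (Subgroup.mem_bot.mp h2)
    have hcardT : ({v : G | zpowers v = zpowers z} ∪ {1} : Set G).ncard = m.totient + 1 := by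
      rw [Set.union_singleton, Set.ncard_insert_of_notMem hone (Set.toFinite _), ncard_gens]
    have hd'ge : m.totient + 1 ≤ d' := by
      calc m.totient + 1 = ({v : G | zpowers v = zpowers z} ∪ {1} : Set G).ncard := hcardT.symm
      _ = ((⇑e) '' ({v : G | zpowers v = zpowers z} ∪ {1})).ncard :=
          (Set.ncard_image_of_injective _ e.injective).symm
      _ ≤ (K' : Set H).ncard := Set.ncard_le_ncard hTsub (Set.toFinite _)
      _ = d' := hKcard
    have hd'a : d' ∣ orderOf (e x) := by
      have h2 := Subgroup.card_dvd_of_le (inf_le_left : K' ≤ zpowers (e x))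
      rwa [Nat.card_zpowers] at h2
    have hd'b : d' ∣ orderOf (e y) := by
      have h2 := Subgroup.card_dvd_of_le (inf_le_right : K' ≤ zpowers (e y))
      rwa [Nat.card_zpowers] at h2
    have hn0d : orderOf (e z) ∣ d' := by
      have h2 := Subgroup.card_dvd_of_le (show zpowers (e z) ≤ K' from zpowers_le.mpr hz0K)
      rwa [Nat.card_zpowers] at h2
    have hφa_le : (orderOf x).totient ≤ m.totient :=
      Nat.le_of_dvd (Nat.totient_pos.mpr (orderOf_pos z)) (Nat.totient_dvd_of_dvd hadvd)
    have hφb_le : (orderOf y).totient ≤ m.totient :=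
      Nat.le_of_dvd (Nat.totient_pos.mpr (orderOf_pos z)) (Nat.totient_dvd_of_dvd hbdvd)
    have hd'pos : 0 < d' := by omega
    by_cases hanom : ∀ v' : H, twin v' (e z) → zpowers v' = zpowers (e z)
    · -- no anomaly at e z
      have hn0tot : (orderOf (e z)).totient = m.totient := by
        have h1 : {v' : H | twin v' (e z)}.ncard = m.totient := by
          rw [← twinset_image e z, Set.ncard_image_of_injective _ e.injective]
          have hseteq : {v : G | twin v z} = {v : G | zpowers v = zpowers z} := by
            ext v
            exact ⟨htwz v, fun h => twin_of_zpowers_eq h⟩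
          rw [hseteq, ncard_gens]
        have h2 : {v' : H | twin v' (e z)} = {v' : H | zpowers v' = zpowers (e z)} := by
          ext v'
          exact ⟨hanom v', fun h => twin_of_zpowers_eq h⟩
        rw [h2, ncard_gens] at h1
        exact h1
      have c1 : (orderOf (e z)).totient ≤ d'.totient :=
        Nat.le_of_dvd (Nat.totient_pos.mpr hd'pos) (Nat.totient_dvd_of_dvd hn0d)
      have c2 : d'.totient ≤ (orderOf (e x)).totient :=
        Nat.le_of_dvd (Nat.totient_pos.mpr (orderOf_pos (e x))) (Nat.totient_dvd_of_dvd hd'a)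
      have c2b : d'.totient ≤ (orderOf (e y)).totient :=
        Nat.le_of_dvd (Nat.totient_pos.mpr (orderOf_pos (e y))) (Nat.totient_dvd_of_dvd hd'b)
      have e1 : m.totient = (orderOf x).totient := by omega
      have e2 : m.totient = (orderOf y).totient := by omega
      have hanem : orderOf x ≠ m := by
        intro hh
        apply hcxy
        have h3 : zpowers x = zpowers z := zpowers_eq_of_mem_of_orderOf_eq hx hh
        exact Or.inr (by rw [h3]; exact hy)
      have hbnem : orderOf y ≠ m := by
        intro hh
        apply hcxy
        have h3 : zpowers y = zpowers z := zpowers_eq_of_mem_of_orderOf_eq hy hh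
        exact Or.inl (by rw [h3]; exact hx)
      have hm2a : m = 2 * orderOf x := totient_eq_imp (orderOf_pos z) hadvd hanem e1
      have hm2b : m = 2 * orderOf y := totient_eq_imp (orderOf_pos z) hbdvd hbnem e2
      have hab : orderOf y = orderOf x := by omega
      exact hcxy (Or.inr (mem_zpowers_of_orderOf_dvd hy hx (by rw [hab])))
    · -- anomaly at e z
      push_neg at hanom
      obtain ⟨v', htv', hnev'⟩ := hanom
      have hv'K : v' ∈ K' := by
        have h1 : cmp v' (e x) := ((htv' (e x)).mpr hcz'x'.symm).symm
        have h2 : cmp v' (e y) := ((htv' (e y)).mpr hcz'y'.symm).symm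
        exact dich _ h1 h2
      have hv'1 : v' ≠ 1 := by
        rintro rfl
        have hstar0 : ∀ w', cmp (e z) w' := fun w' => ((htv' w').mp (cmp_one_right w')).symm
        exact hz0'1 (hSH _ hstar0)
      obtain ⟨p, hp, ⟨i, hi1, hoi⟩, ⟨j, hj1, hoj⟩⟩ := T0 htv' hnev' hv'1 hz0'1
      have hallp : ∀ s : ℕ, s.Prime → s ∣ orderOf (e x) → s = p := by
        intro s hs hsd
        by_contra hsp
        have hv'x : v' ∈ zpowers (e x) := hv'K.1
        have hz0x : e z ∈ zpowers (e x) := hz0K.1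
        rcases lt_trichotomy i j with hij | hij | hij
        · exact no_twin_pp hv'x htv' hp hs hsp hoi hoj hij hsd
        · apply hnev'
          have ho : orderOf v' = orderOf (e z) := by rw [hoi, hoj, hij]
          rcases cmp_of_twin_left htv' with hc | hc
          · exact zpowers_eq_of_mem_of_orderOf_eq hc ho
          · exact (zpowers_eq_of_mem_of_orderOf_eq hc ho.symm).symm
        · exact no_twin_pp hz0x htv'.symm hp hs hsp hoj hoi hij hsd
      have hd'2 : 2 ≤ d' := by
        have h1 : 1 ≤ m.totient := Nat.totient_pos.mpr (orderOf_pos z)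
        omega
      have hpd' : p ∣ d' := by
        have h1 : d'.minFac.Prime := Nat.minFac_prime (by omega)
        have h2 : d'.minFac ∣ orderOf (e x) := (Nat.minFac_dvd d').trans hd'a
        have h3 := hallp _ h1 h2
        exact h3 ▸ Nat.minFac_dvd d'
      have hd'ne : d' ≠ orderOf (e x) := by
        intro hh
        have hle : (K' : Set H) ⊆ (zpowers (e x) : Set H) :=
          fun w hw => (inf_le_left : K' ≤ zpowers (e x)) hw
        have h1 : (zpowers (e x) : Set H).ncard = orderOf (e x) := by
          rw [← Nat.card_zpowers (e x), ← Nat.card_coe_set_eq]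
          rfl
        have hcard2 : (zpowers (e x) : Set H).ncard ≤ (K' : Set H).ncard := by
          rw [h1, hKcard]
          omega
        have hEq := Set.eq_of_subset_of_ncard_le hle hcard2 (Set.toFinite _)
        have hxK : e x ∈ K' := by
          have h2 : (e x) ∈ (zpowers (e x) : Set H) := mem_zpowers (e x)
          rw [← hEq] at h2
          exact h2
        exact hncxy' (Or.inl hxK.2)
      have hq2 : orderOf (e x) / d' ≠ 1 := by
        intro hh
        apply hd'ne
        have h2 := Nat.div_mul_cancel hd'a
        rw [hh, one_mul] at h2
        exact h2
      have hdd : orderOf (e x) / d' ∣ orderOf (e x) := ⟨d', (Nat.div_mul_cancel hd'a).symm⟩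
      have hq3 : (orderOf (e x) / d').minFac = p := by
        apply hallp
        · exact Nat.minFac_prime hq2
        · exact (Nat.minFac_dvd _).trans hdd
      have hpd2 : p ∣ orderOf (e x) / d' := hq3 ▸ Nat.minFac_dvd _
      have hpda : p * d' ∣ orderOf (e x) := by
        obtain ⟨t, ht⟩ := hpd2
        refine ⟨t, ?_⟩
        have h2 := Nat.div_mul_cancel hd'a
        rw [← h2, ht]
        ring
      have hest1 : (p * d').totient = p * d'.totient := Nat.totient_mul_of_prime_of_dvd hp hpd'
      have hest2 : (p * d').totient ≤ (orderOf (e x)).totient :=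
        Nat.le_of_dvd (Nat.totient_pos.mpr (orderOf_pos (e x))) (Nat.totient_dvd_of_dvd hpda)
      have hd'pow : ∃ c, 1 ≤ c ∧ d' = p ^ c := by
        have hall : ∀ {q'}, q'.Prime → q' ∣ d' → q' = p :=
          fun h1 h2 => hallp _ h1 (h2.trans hd'a)
        have h2 := Nat.eq_prime_pow_of_unique_prime_dvd (by omega : d' ≠ 0) hall
        refine ⟨_, ?_, h2⟩
        rcases Nat.eq_zero_or_pos (d'.primeFactorsList.length) with h0 | h0
        · rw [h0, pow_zero] at h2
          omega
        · exact h0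
      obtain ⟨c, hc1, hceq⟩ := hd'pow
      have hptot : d' ≤ p * d'.totient := by
        rw [hceq, Nat.totient_prime_pow hp (by omega)]
        have hpc : p * p ^ (c - 1) = p ^ c := by
          rw [← pow_succ']
          congr 1
          omega
        have h3 : p ^ (c - 1) ≤ p ^ (c - 1) * (p - 1) :=
          Nat.le_mul_of_pos_right _ (by have := hp.two_le; omega)
        calc p ^ c = p * p ^ (c - 1) := hpc.symm
        _ ≤ p * (p ^ (c - 1) * (p - 1)) := Nat.mul_le_mul_left p h3
      omega

end Graph

end PGAux

theorem stmt_11 {G H : Type*} [Group G] [Group H] [Fintype G] [Fintype H]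
    (e : powerGraph G ≃g powerGraph H) (x y : G) :
    (enhancedPowerGraph G).Adj x y ↔ (enhancedPowerGraph H).Adj (e x) (e y) := by
  constructor
  · rintro ⟨hne, z, hx, hy⟩
    exact ⟨fun hh => hne (e.injective hh), PGAux.main_forward e hne ⟨z, hx, hy⟩⟩
  · rintro ⟨hne', z', hx', hy'⟩
    have hne : x ≠ y := fun hh => hne' (by rw [hh])
    refine ⟨hne, ?_⟩
    have h2 := PGAux.main_forward e.symm hne' ⟨z', hx', hy'⟩
    rwa [e.symm_apply_apply, e.symm_apply_apply] at h2
end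

section
/- Let G be the direct product of six cyclic groups of orders 2, 2, 3, 3, 5, 5 with generators a₁, a₂, b₁, b₂, c₁, c₂ respectively. Then the five elements a₁b₁, b₁c₂, a₂, b₂, a₁c₁ induce a 5-cycle in the enhanced power graph of G; in particular, the enhanced power graph of this finite abelian group is not perfect. -/
open SimpleGraph

/-- The group `C₂ × C₂ × C₃ × C₃ × C₅ × C₅`, written multiplicatively. -/
abbrev G18 : Type :=
  Multiplicative (ZMod 2 × ZMod 2 × ZMod 3 × ZMod 3 × ZMod 5 × ZMod 5)

def a₁ : G18 := Multiplicative.ofAdd (1, 0, 0, 0, 0, 0)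
def a₂ : G18 := Multiplicative.ofAdd (0, 1, 0, 0, 0, 0)
def b₁ : G18 := Multiplicative.ofAdd (0, 0, 1, 0, 0, 0)
def b₂ : G18 := Multiplicative.ofAdd (0, 0, 0, 1, 0, 0)
def c₁ : G18 := Multiplicative.ofAdd (0, 0, 0, 0, 1, 0)
def c₂ : G18 := Multiplicative.ofAdd (0, 0, 0, 0, 0, 1)

/-- The five elements `a₁b₁, b₁c₂, a₂, b₂, a₁c₁`. -/
def v : Fin 5 → G18 := ![a₁ * b₁, b₁ * c₂, a₂, b₂, a₁ * c₁]

instance : DecidableEq G18 :=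
  inferInstanceAs (DecidableEq (ZMod 2 × ZMod 2 × ZMod 3 × ZMod 3 × ZMod 5 × ZMod 5))

lemma key' {n : ℕ} (hn : (1:ZMod n) ≠ 0) {x y a b : ZMod n}
    (h1 : a * x = 1) (h2 : a * y = 0) (h4 : b * y = 1) : False := by
  have ha : a = 0 := by
    calc a = a * (b * y) := by rw [h4, mul_one]
    _ = b * (a * y) := by ring
    _ = 0 := by rw [h2, mul_zero]
  rw [ha, zero_mul] at h1; exact hn h1.symm

lemma hv0 : v 0 = a₁ * b₁ := rfl
lemma hv1 : v 1 = b₁ * c₂ := rfl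
lemma hv2 : v 2 = a₂ := rfl
lemma hv3 : v 3 = b₂ := rfl
lemma hv4 : v 4 = a₁ * c₁ := rfl

/-- helper to build adjacency. -/
lemma mkAdj {x y : G18} (z : G18) (m k : ℤ) (h1 : z ^ m = x) (h2 : z ^ k = y)
    (hne : x ≠ y) : (enhancedPowerGraph G18).Adj x y :=
  ⟨hne, z, ⟨m, h1⟩, ⟨k, h2⟩⟩

lemma e01 : (enhancedPowerGraph G18).Adj (v 0) (v 1) := by
  rw [hv0, hv1]
  exact mkAdj (Multiplicative.ofAdd (1,0,1,0,0,1)) 25 16 (by decide) (by decide) (by decide)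

lemma e12 : (enhancedPowerGraph G18).Adj (v 1) (v 2) := by
  rw [hv1, hv2]
  exact mkAdj (Multiplicative.ofAdd (0,1,1,0,0,1)) 16 15 (by decide) (by decide) (by decide)

lemma e23 : (enhancedPowerGraph G18).Adj (v 2) (v 3) := by
  rw [hv2, hv3]
  exact mkAdj (Multiplicative.ofAdd (0,1,0,1,0,0)) 3 4 (by decide) (by decide) (by decide)

lemma e34 : (enhancedPowerGraph G18).Adj (v 3) (v 4) := by
  rw [hv3, hv4]
  exact mkAdj (Multiplicative.ofAdd (1,0,0,1,1,0)) 10 21 (by decide) (by decide) (by decide)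

lemma e40 : (enhancedPowerGraph G18).Adj (v 4) (v 0) := by
  rw [hv4, hv0]
  exact mkAdj (Multiplicative.ofAdd (1,0,1,0,1,0)) 21 25 (by decide) (by decide) (by decide)

section NonAdj

/-- extract component equations from a common generator and derive contradiction. -/
lemma nocommon (i j : Fin 5)
    (hij : (i, j) ∈ [((0:Fin 5),(2:Fin 5)), (0,3), (1,3), (1,4), (2,4)])
    (z : G18) (m k : ℤ) (hm : z ^ m = v i) (hk : z ^ k = v j) : False := by
  have hm' := congrArg Multiplicative.toAdd hm
  have hk' := congrArg Multiplicative.toAdd hk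
  fin_cases hij <;>
  · simp only [hv0, hv1, hv2, hv3, hv4, toAdd_zpow, toAdd_mul, a₁, a₂, b₁, b₂, c₁, c₂,
      toAdd_ofAdd, Prod.ext_iff, Prod.smul_fst, Prod.smul_snd, Prod.mk_add_mk,
      Prod.fst_add, Prod.snd_add, zsmul_eq_mul, add_zero, zero_add] at hm' hk'
    first
    | exact key' (by decide) hm'.1 hm'.2.1 hk'.2.1
    | exact key' (by decide) hm'.2.2.1 hm'.2.2.2.1 hk'.2.2.2.1
    | exact key' (by decide) hm'.2.2.2.2.2 hm'.2.2.2.2.1 hk'.2.2.2.2.1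
    | exact key' (by decide) hm'.2.1 hm'.1 hk'.1

end NonAdj

lemma nadj (i j : Fin 5)
    (hij : (i, j) ∈ [((0:Fin 5),(2:Fin 5)), (0,3), (1,3), (1,4), (2,4)]) :
    ¬ (enhancedPowerGraph G18).Adj (v i) (v j) := by
  rintro ⟨-, z, ⟨m, hm⟩, ⟨k, hk⟩⟩
  exact nocommon i j hij z m k hm hk

lemma adjIff : ∀ i j : Fin 5,
    (enhancedPowerGraph G18).Adj (v i) (v j) ↔ (j = i + 1 ∨ i = j + 1) := by
  intro i j
  fin_cases i <;> fin_cases j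
  · exact iff_of_false ((enhancedPowerGraph G18).irrefl) (by decide)
  · exact iff_of_true e01 (by decide)
  · exact iff_of_false (nadj 0 2 (by decide)) (by decide)
  · exact iff_of_false (nadj 0 3 (by decide)) (by decide)
  · exact iff_of_true e40.symm (by decide)
  · exact iff_of_true e01.symm (by decide)
  · exact iff_of_false ((enhancedPowerGraph G18).irrefl) (by decide)
  · exact iff_of_true e12 (by decide)
  · exact iff_of_false (nadj 1 3 (by decide)) (by decide)
  · exact iff_of_false (nadj 1 4 (by decide)) (by decide)
  · exact iff_of_false (fun h => nadj 0 2 (by decide) h.symm) (by decide)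
  · exact iff_of_true e12.symm (by decide)
  · exact iff_of_false ((enhancedPowerGraph G18).irrefl) (by decide)
  · exact iff_of_true e23 (by decide)
  · exact iff_of_false (nadj 2 4 (by decide)) (by decide)
  · exact iff_of_false (fun h => nadj 0 3 (by decide) h.symm) (by decide)
  · exact iff_of_false (fun h => nadj 1 3 (by decide) h.symm) (by decide)
  · exact iff_of_true e23.symm (by decide)
  · exact iff_of_false ((enhancedPowerGraph G18).irrefl) (by decide)
  · exact iff_of_true e34 (by decide)
  · exact iff_of_true e40 (by decide)
  · exact iff_of_false (fun h => nadj 1 4 (by decide) h.symm) (by decide)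
  · exact iff_of_false (fun h => nadj 2 4 (by decide) h.symm) (by decide)
  · exact iff_of_true e34.symm (by decide)
  · exact iff_of_false ((enhancedPowerGraph G18).irrefl) (by decide)

lemma cycle_triangle_free : ∀ i j k : Fin 5, (j = i+1 ∨ i = j+1) → (k = i+1 ∨ i = k+1) →
    (k = j+1 ∨ j = k+1) → False := by decide

lemma vinj : Function.Injective v := by
  have h : ∀ a b : Fin 5, v a = v b → a = b := by decide
  exact fun a b => h a b

theorem stmt_18 :
    Function.Injective v ∧
    (∀ i j : Fin 5, (enhancedPowerGraph G18).Adj (v i) (v j) ↔ (j = i + 1 ∨ i = j + 1)) ∧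
    ¬ (∀ s : Set G18,
        (SimpleGraph.induce s (enhancedPowerGraph G18)).chromaticNumber =
          ((SimpleGraph.induce s (enhancedPowerGraph G18)).cliqueNum : ℕ∞)) := by
  refine ⟨vinj, adjIff, ?_⟩
  intro hperf
  set s : Set G18 := Set.range v with hs
  set Γ : SimpleGraph ↥s := SimpleGraph.induce s (enhancedPowerGraph G18) with hΓ
  classical
  haveI : Fintype ↥s := Fintype.ofFinite _
  -- triangle-free
  have hfree : Γ.CliqueFree 3 := by
    intro t ht
    obtain ⟨x, y, w, hxy, hxw, hyw, rfl⟩ := Finset.card_eq_three.mp ht.card_eq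
    obtain ⟨i, hi⟩ := x.2
    obtain ⟨j, hj⟩ := y.2
    obtain ⟨k, hk⟩ := w.2
    have Axy : (enhancedPowerGraph G18).Adj (v i) (v j) := by
      rw [hi, hj]; exact ht.isClique (by simp) (by simp) hxy
    have Axw : (enhancedPowerGraph G18).Adj (v i) (v k) := by
      rw [hi, hk]; exact ht.isClique (by simp) (by simp) hxw
    have Ayw : (enhancedPowerGraph G18).Adj (v j) (v k) := by
      rw [hj, hk]; exact ht.isClique (by simp) (by simp) hyw
    rw [adjIff] at Axy Axw Ayw
    exact cycle_triangle_free i j k Axy Axw Ayw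
  have hcn : Γ.cliqueNum ≤ 2 := by
    by_contra h
    push_neg at h
    obtain ⟨t, ht⟩ := Γ.exists_isNClique_cliqueNum
    obtain ⟨u, hu, hcard⟩ := t.exists_subset_card_eq (show 3 ≤ t.card by rw [ht.card_eq]; omega)
    exact hfree u ⟨ht.isClique.subset hu, hcard⟩
  have hcol : Γ.Colorable 2 := by
    rw [← SimpleGraph.chromaticNumber_le_iff_colorable, hperf s]
    exact_mod_cast hcn
  obtain ⟨C⟩ := hcol
  set c : Fin 5 → Fin 2 := fun i => C ⟨v i, ⟨i, rfl⟩⟩ with hc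
  have hcadj : ∀ i : Fin 5, c i ≠ c (i + 1) := by
    intro i
    refine C.valid ?_
    exact (adjIff i (i + 1)).mpr (Or.inl rfl)
  have : ∀ c' : Fin 5 → Fin 2, ∃ i, c' i = c' (i + 1) := by decide
  obtain ⟨i, hi⟩ := this c
  exact hcadj i hi
end
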